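/- arXiv:1312.2572 — 6 statements merged into one kernel-verified Lean document; each statement's English description precedes it below -/
import Mathlib

section
/- Let 𝔩 be a nonzero prime of O_K that is inert in L/K, write 𝔏 := 𝔩O_L. Assume a, b, c, d ∈ L satisfy ν_𝔏(a), ν_𝔏(b), ν_𝔏(c) ≥ 0 and ν_𝔏(d) = 0, and that the residues of a/d, b/d, c/d in O_L/𝔏 do not lie in the subfield O_K/𝔩. If moreover a ≡ b (mod 𝔏), then the cubic surface S defined by T0T1T2 = N_{L/K}(aT0 + bT1 + cT2 + dT3) has a K_𝔩-rational point. -/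
open NumberField IsDedekindDomain MvPolynomial
open scoped Multiplicative


theorem zm_pow_le_pow {α : Type*} [LinearOrderedCommMonoidWithZero α] {ε : α} (hε : ε ≤ 1)
    {m n : ℕ} (h : m ≤ n) : ε ^ n ≤ ε ^ m := by
  obtain ⟨c, rfl⟩ := Nat.exists_eq_add_of_le h
  rw [pow_add]
  calc ε ^ m * ε ^ c ≤ ε ^ m * 1 := mul_le_mul_right (pow_le_one' hε c) _
  _ = ε ^ m := mul_one _

theorem intValuation_map_eq
    {A B : Type*} [CommRing A] [IsDedekindDomain A] [CommRing B] [IsDedekindDomain B]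
    (v : HeightOneSpectrum A) (w : HeightOneSpectrum B)
    (φ : A →+* B) (hinj : Function.Injective φ)
    (hmap : Ideal.map φ v.asIdeal = w.asIdeal) (x : A) :
    w.intValuation (φ x) = v.intValuation x := by
  rcases eq_or_ne x 0 with rfl | hx
  · simp
  have hφx : φ x ≠ 0 := fun h => hx (hinj (h.trans (map_zero φ).symm))
  have hspan : Ideal.span {φ x} = Ideal.map φ (Ideal.span {x}) := by
    rw [Ideal.map_span, Set.image_singleton]
  -- key dvd transfer
  have key : ∀ n : ℕ, w.asIdeal ^ n ∣ Ideal.span {φ x} ↔ v.asIdeal ^ n ∣ Ideal.span {x} := by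
    intro n
    constructor
    · intro hn
      induction n with
      | zero => exact one_dvd _
      | succ n ih =>
        have hn' : v.asIdeal ^ n ∣ Ideal.span {x} :=
          ih (dvd_trans (pow_dvd_pow _ (Nat.le_succ n)) hn)
        obtain ⟨J, hJ⟩ := hn'
        have hBJ : Ideal.span {φ x} = w.asIdeal ^ n * Ideal.map φ J := by
          rw [hspan, hJ, Ideal.map_mul, Ideal.map_pow, hmap]
        have hwn : w.asIdeal ^ n ≠ 0 := pow_ne_zero _ w.ne_bot
        have hdvd : w.asIdeal ∣ Ideal.map φ J := by
          rw [hBJ, pow_succ] at hn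
          exact (mul_dvd_mul_iff_left hwn).mp hn
        have hJw : J ≤ Ideal.comap φ w.asIdeal := by
          rw [← Ideal.map_le_iff_le_comap]
          exact Ideal.le_of_dvd hdvd
        have hvle : v.asIdeal ≤ Ideal.comap φ w.asIdeal := by
          rw [← Ideal.map_le_iff_le_comap, hmap]
        have hcomapne : Ideal.comap φ w.asIdeal ≠ ⊤ := by
          intro h
          have h1 : (1 : A) ∈ Ideal.comap φ w.asIdeal := h ▸ trivial
          have : (1 : B) ∈ w.asIdeal := by simpa using h1
          exact w.isPrime.ne_top (w.asIdeal.eq_top_iff_one.mpr this)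
        have hprime : v.asIdeal.IsMaximal := Ideal.IsPrime.isMaximal v.isPrime v.ne_bot
        have heq : v.asIdeal = Ideal.comap φ w.asIdeal := hprime.eq_of_le hcomapne hvle
        rw [hJ, pow_succ]
        exact mul_dvd_mul_left _ ((Ideal.dvd_iff_le).mpr (heq ▸ hJw))
    · rintro ⟨J, hJ⟩
      refine ⟨Ideal.map φ J, ?_⟩
      rw [hspan, hJ, Ideal.map_mul, Ideal.map_pow, hmap]
  rw [IsDedekindDomain.HeightOneSpectrum.intValuation_apply,
    IsDedekindDomain.HeightOneSpectrum.intValuation_apply]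
  have h1 := w.intValuationDef_if_neg hφx
  have h2 := v.intValuationDef_if_neg hx
  apply le_antisymm
  · rw [h2]
    refine (w.intValuation_le_pow_iff_dvd _ _).mpr ((key _).mpr ?_)
    exact (v.intValuation_le_pow_iff_dvd _ _).mp (le_of_eq h2)
  · rw [h1]
    refine (v.intValuation_le_pow_iff_dvd _ _).mpr ((key _).mp ?_)
    exact (w.intValuation_le_pow_iff_dvd _ _).mp (le_of_eq h1)

theorem valuation_map_eq
    {A B : Type*} [CommRing A] [IsDedekindDomain A] [CommRing B] [IsDedekindDomain B]
    {FA FB : Type*} [Field FA] [Field FB] [Algebra A FA] [IsFractionRing A FA]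
    [Algebra B FB] [IsFractionRing B FB]
    (v : HeightOneSpectrum A) (w : HeightOneSpectrum B)
    (φ : A →+* B) (hinj : Function.Injective φ) (Φ : FA →+* FB)
    (hcomp : ∀ x : A, Φ (algebraMap A FA x) = algebraMap B FB (φ x))
    (hmap : Ideal.map φ v.asIdeal = w.asIdeal) (u : FA) :
    w.valuation FB (Φ u) = v.valuation FA u := by
  obtain ⟨x, y, hy, rfl⟩ := IsFractionRing.div_surjective (A := A) u
  have hy0 : y ≠ 0 := nonZeroDivisors.ne_zero hy
  rw [map_div₀, hcomp, hcomp, map_div₀, map_div₀,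
    IsDedekindDomain.HeightOneSpectrum.valuation_of_algebraMap,
    IsDedekindDomain.HeightOneSpectrum.valuation_of_algebraMap,
    IsDedekindDomain.HeightOneSpectrum.valuation_of_algebraMap,
    IsDedekindDomain.HeightOneSpectrum.valuation_of_algebraMap,
    intValuation_map_eq v w φ hinj hmap, intValuation_map_eq v w φ hinj hmap]

section Hensel
open Polynomial Filter


variable {F : Type*} [Field F] [Valued F (WithZero (Multiplicative ℤ))]

/-- Evaluation of a polynomial with integral coefficients at an integral point is integral. -/
theorem val_eval_le_one (p : Polynomial F) (hp : ∀ i, Valued.v (p.coeff i) ≤ 1)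
    {x : F} (hx : Valued.v x ≤ 1) : Valued.v (p.eval x) ≤ 1 := by
  rw [Polynomial.eval_eq_sum_range]
  refine Valuation.map_sum_le _ fun i _ => ?_
  rw [map_mul, map_pow]
  exact mul_le_one' (hp i) (pow_le_one' hx i)

/-- A version of `Polynomial.binomExpansion` with an integrality bound on the error term. -/
theorem taylor_bound (p : Polynomial F) (hp : ∀ i, Valued.v (p.coeff i) ≤ 1)
    {x y : F} (hx : Valued.v x ≤ 1) (hy : Valued.v y ≤ 1) :
    ∃ k : F, Valued.v k ≤ 1 ∧
      p.eval (x + y) = p.eval x + p.derivative.eval x * y + k * y ^ 2 := by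
  set O : Subring F := (Valued.v : Valuation F (WithZero (Multiplicative ℤ))).integer with hO
  set ι : O →+* F := O.subtype with hι
  -- lift p to a polynomial over the valuation subring
  set p' : Polynomial O := ∑ i ∈ Finset.range (p.natDegree + 1),
      Polynomial.C (⟨p.coeff i, hp i⟩ : O) * Polynomial.X ^ i with hp'
  have hmap : p'.map ι = p := by
    rw [hp', Polynomial.map_sum]
    conv_rhs => rw [p.as_sum_range' (p.natDegree + 1) (Nat.lt_succ_self _)]
    refine Finset.sum_congr rfl fun i _ => ?_
    rw [Polynomial.map_mul, Polynomial.map_C, Polynomial.map_pow, Polynomial.map_X,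
      Polynomial.C_mul_X_pow_eq_monomial]
    rfl
  obtain ⟨k, hk⟩ := p'.binomExpansion (⟨x, hx⟩ : O) (⟨y, hy⟩ : O)
  refine ⟨ι k, k.2, ?_⟩
  have := congrArg ι hk
  simp only [map_add, map_mul, map_pow] at this
  have heval : ∀ (q : Polynomial O) (t : O), ι (q.eval t) = (q.map ι).eval (ι t) := by
    intro q t
    rw [Polynomial.eval_map, Polynomial.eval₂_at_apply]
  rw [heval, heval, heval, ← Polynomial.derivative_map, hmap] at this
  simpa [hι] using this

/-- Difference bound: `p(x) - p(y)` is `(x-y)` times an integral element. -/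
theorem diff_bound (p : Polynomial F) (hp : ∀ i, Valued.v (p.coeff i) ≤ 1)
    {x y : F} (hx : Valued.v x ≤ 1) (hy : Valued.v y ≤ 1) :
    ∃ k : F, Valued.v k ≤ 1 ∧ p.eval x - p.eval y = (x - y) * k := by
  set O : Subring F := (Valued.v : Valuation F (WithZero (Multiplicative ℤ))).integer with hO
  set ι : O →+* F := O.subtype with hι
  set p' : Polynomial O := ∑ i ∈ Finset.range (p.natDegree + 1),
      Polynomial.C (⟨p.coeff i, hp i⟩ : O) * Polynomial.X ^ i with hp'
  have hmap : p'.map ι = p := by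
    rw [hp', Polynomial.map_sum]
    conv_rhs => rw [p.as_sum_range' (p.natDegree + 1) (Nat.lt_succ_self _)]
    refine Finset.sum_congr rfl fun i _ => ?_
    rw [Polynomial.map_mul, Polynomial.map_C, Polynomial.map_pow, Polynomial.map_X,
      Polynomial.C_mul_X_pow_eq_monomial]
    rfl
  obtain ⟨k, hk⟩ := Polynomial.sub_dvd_eval_sub (⟨x, hx⟩ : O) (⟨y, hy⟩ : O) p'
  refine ⟨ι k, k.2, ?_⟩
  have := congrArg ι hk
  simp only [map_mul, map_sub] at this
  have heval : ∀ (q : Polynomial O) (t : O), ι (q.eval t) = (q.map ι).eval (ι t) := by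
    intro q t
    rw [Polynomial.eval_map, Polynomial.eval₂_at_apply]
  rw [heval, heval, hmap] at this
  simpa [hι] using this

theorem zm_exists_pow_lt {ε : WithZero (Multiplicative ℤ)} (hε0 : ε ≠ 0) (hε1 : ε < 1)
    (γ : WithZero (Multiplicative ℤ)) (hγ : γ ≠ 0) : ∃ N : ℕ, ∀ n ≥ N, ε ^ (n + 1) < γ := by
  obtain ⟨d, rfl⟩ := WithZero.ne_zero_iff_exists.mp hε0
  obtain ⟨c, rfl⟩ := WithZero.ne_zero_iff_exists.mp hγ
  set e : ℤ := Multiplicative.toAdd d with he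
  set g : ℤ := Multiplicative.toAdd c with hg
  have hed : e ≤ -1 := by
    have : d < 1 := by exact_mod_cast hε1
    have := Multiplicative.toAdd_lt.mpr this
    simp only [toAdd_one] at this
    omega
  refine ⟨g.natAbs + 1, fun n hn => ?_⟩
  have hcast : (d : WithZero (Multiplicative ℤ)) ^ (n + 1) = ((d ^ (n + 1) : Multiplicative ℤ) :
      WithZero (Multiplicative ℤ)) := by push_cast; ring
  rw [hcast, WithZero.coe_lt_coe, ← Multiplicative.toAdd_lt, toAdd_pow, nsmul_eq_mul]
  have h2 : ((n + 1 : ℕ) : ℤ) * e ≤ ((n + 1 : ℕ) : ℤ) * (-1) :=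
    mul_le_mul_of_nonneg_left hed (by positivity)
  rw [← he, ← hg]
  omega

theorem val_natCast_le_one (n : ℕ) : Valued.v ((n : F)) ≤ 1 := by
  induction n with
  | zero => simp
  | succ n ih =>
    push_cast
    exact le_trans (Valuation.map_add _ _ _) (max_le ih (le_of_eq (Valuation.map_one _)))

/-- Hensel's lemma (simple form) for a complete valued field. -/
theorem hensel_aux [CompleteSpace F]
    (f : Polynomial F) (hcoeff : ∀ i, Valued.v (f.coeff i) ≤ 1)
    (h0 : Valued.v (f.eval 0) < 1) (h1 : Valued.v (f.derivative.eval 0) = 1) :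
    ∃ x : F, f.eval x = 0 := by
  classical
  by_cases hf0 : f.eval 0 = 0
  · exact ⟨0, hf0⟩
  set v : Valuation F (WithZero (Multiplicative ℤ)) := Valued.v with hv
  set ε : WithZero (Multiplicative ℤ) := v (f.eval 0) with hε
  have hε0 : ε ≠ 0 := (Valuation.ne_zero_iff v).mpr hf0
  have hε1 : ε < 1 := h0
  have hεle : ε ≤ 1 := le_of_lt hε1
  set D : Polynomial F := f.derivative with hD
  have hDcoeff : ∀ i, v (D.coeff i) ≤ 1 := by
    intro i
    rw [hD, Polynomial.coeff_derivative, map_mul]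
    have : ((i : F) + 1) = ((i + 1 : ℕ) : F) := by push_cast; ring
    rw [this]
    exact mul_le_one' (hcoeff _) (val_natCast_le_one _)
  -- the Newton iteration map
  set g : F → F := fun z => z - f.eval z * (D.eval z)⁻¹ with hg
  set x : ℕ → F := fun n => g^[n] 0 with hx
  have hx0 : x 0 = 0 := rfl
  have hxs : ∀ n, x (n + 1) = g (x n) := fun n => Function.iterate_succ_apply' g n 0
  -- the invariant
  have inv : ∀ n, v (x n) ≤ ε ∧ v (f.eval (x n)) ≤ ε ^ (n + 1) ∧ v (D.eval (x n)) = 1 := by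
    intro n
    induction n with
    | zero => refine ⟨by simp [hx0], by simp [hx0, pow_one, hε], by simp [hx0, h1]⟩
    | succ n ih =>
      obtain ⟨hxn, hfn, hDn⟩ := ih
      have hxle1 : v (x n) ≤ 1 := hxn.trans hεle
      have hDnz : D.eval (x n) ≠ 0 := by
        intro h
        rw [h, map_zero] at hDn
        exact zero_ne_one hDn
      set y : F := -(f.eval (x n) * (D.eval (x n))⁻¹) with hy
      have hxsy : x (n + 1) = x n + y := by rw [hxs, hg]; ring
      have hvy : v y = v (f.eval (x n)) := by
        rw [hy, Valuation.map_neg, map_mul, map_inv₀, hDn, inv_one, mul_one]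
      have hvyε : v y ≤ ε ^ (n + 1) := hvy ▸ hfn
      have hvyε' : v y ≤ ε := hvyε.trans ((zm_pow_le_pow hεle (Nat.le_add_left 1 n)).trans_eq (pow_one ε))
      have hvy1 : v y ≤ 1 := hvyε'.trans hεle
      have hxn1 : v (x (n + 1)) ≤ ε := by
        rw [hxsy]
        exact le_trans (Valuation.map_add _ _ _) (max_le hxn hvyε')
      have hxn1le1 : v (x (n + 1)) ≤ 1 := hxn1.trans hεle
      obtain ⟨k, hk1, hkeq⟩ := taylor_bound f hcoeff hxle1 hvy1
      have hcancel : D.eval (x n) * y = -(f.eval (x n)) := by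
        rw [hy]; field_simp
      have hfeval : f.eval (x (n + 1)) = k * y ^ 2 := by
        rw [hxsy, hkeq, ← hD, hcancel]; ring
      have hfn1 : v (f.eval (x (n + 1))) ≤ ε ^ (n + 2) := by
        rw [hfeval, map_mul, map_pow]
        calc v k * v y ^ 2 ≤ 1 * (ε ^ (n + 1)) ^ 2 :=
              mul_le_mul' hk1 (pow_le_pow_left' hvyε 2)
          _ = ε ^ (2 * (n + 1)) := by rw [one_mul, ← pow_mul, mul_comm]
          _ ≤ ε ^ (n + 2) := zm_pow_le_pow hεle (by omega)
      have hDn1 : v (D.eval (x (n + 1))) = 1 := by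
        obtain ⟨k', hk'1, hk'eq⟩ := diff_bound D hDcoeff hxn1le1 (x := x (n+1)) (y := (0:F)) (by rw [map_zero]; exact zero_le_one)
        have hsmall : v (D.eval (x (n + 1)) - D.eval 0) < 1 := by
          rw [hk'eq, map_mul, sub_zero]
          calc v (x (n + 1)) * v k' ≤ ε * 1 := mul_le_mul' hxn1 hk'1
            _ = ε := mul_one _
            _ < 1 := hε1
        have := Valuation.map_add_eq_of_lt_right v (x := D.eval (x (n + 1)) - D.eval 0)
          (y := D.eval 0) (by rw [h1]; exact hsmall)
        rw [sub_add_cancel] at this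
        rw [this, h1]
      exact ⟨hxn1, hfn1, hDn1⟩
  -- convergence of the Newton sequence
  have hstep : ∀ n, v (x (n + 1) - x n) ≤ ε ^ (n + 1) := by
    intro n
    obtain ⟨hxn, hfn, hDn⟩ := inv n
    have heq : x (n + 1) - x n = -(f.eval (x n) * (D.eval (x n))⁻¹) := by rw [hxs, hg]; ring
    rw [heq, Valuation.map_neg, map_mul, map_inv₀, hDn, inv_one, mul_one]
    exact hfn
  have hfar : ∀ n m, n ≤ m → v (x m - x n) ≤ ε ^ (n + 1) := by
    intro n m hnm
    induction m, hnm using Nat.le_induction with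
    | base => rw [sub_self, map_zero]; exact zero_le'
    | succ m hnm ih =>
      have heq : x (m + 1) - x n = (x (m + 1) - x m) + (x m - x n) := by ring
      rw [heq]
      exact le_trans (Valuation.map_add _ _ _)
        (max_le ((hstep m).trans (zm_pow_le_pow hεle (by omega))) ih)
  have hcauchy : CauchySeq x := by
    rw [Filter.HasBasis.cauchySeq_iff (Valued.hasBasis_uniformity F _)]
    intro γ _
    obtain ⟨N, hN⟩ := zm_exists_pow_lt hε0 hε1 (MonoidWithZeroHom.ValueGroup₀.embedding γ.1) (by simp)
    refine ⟨N, fun m hm n hn => ?_⟩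
    simp only [Set.mem_setOf_eq]
    rw [Valuation.restrict_lt_iff_lt_embedding]
    rcases le_total m n with h | h
    · exact lt_of_le_of_lt ((hfar m n h).trans (zm_pow_le_pow hεle (by omega))) (hN N le_rfl)
    · rw [Valuation.map_sub_swap]
      exact lt_of_le_of_lt ((hfar n m h).trans (zm_pow_le_pow hεle (by omega))) (hN N le_rfl)
  obtain ⟨ξ, hξ⟩ := cauchySeq_tendsto_of_complete hcauchy
  have htend1 : Tendsto (fun n => f.eval (x n)) atTop (nhds (f.eval ξ)) :=
    ((Polynomial.continuous f).tendsto ξ).comp hξ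
  have htend2 : Tendsto (fun n => f.eval (x n)) atTop (nhds 0) := by
    rw [(Valued.hasBasis_nhds_zero F _).tendsto_right_iff]
    intro γ _
    obtain ⟨N, hN⟩ := zm_exists_pow_lt hε0 hε1 (MonoidWithZeroHom.ValueGroup₀.embedding γ.1) (by simp)
    filter_upwards [eventually_ge_atTop N] with n hn
    rw [Valuation.restrict_lt_iff_lt_embedding]
    exact lt_of_le_of_lt ((inv n).2.1) (hN n hn)
  exact ⟨ξ, tendsto_nhds_unique htend1 htend2⟩

end Hensel


set_option maxHeartbeats 1000000
set_option synthInstance.maxHeartbeats 400000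

/-- **Proposition (inert primes, part a.i).**  Let `𝔩 = v` be a prime of `O_K` that is inert in
the cyclic cubic extension `L/K`, with `𝔏 = w` the prime `𝔩 O_L` of `O_L`, and write
`ℓ = #(O_K/𝔩)`.  Assume `a, b, c, d ∈ L` are `𝔏`-integral, `d` is a `𝔏`-adic unit, and the
residues of `a/d`, `b/d`, `c/d` in `O_L/𝔏` do not lie in the subfield `O_K/𝔩`.  If moreover `a ≡ b (mod 𝔏)`,
then the cubic surface `T0T1T2 = N_{L/K}(aT0 + bT1 + cT2 + dT3)` (with defining norm form
`P` over `K`) has a `K_𝔩`-rational point. -/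
theorem inert_prime_local_solubility_of_congruent
    {K : Type*} [Field K] [NumberField K]
    {L : Type*} [Field L] [NumberField L] [Algebra K L] [IsGalois K L]
    [FiniteDimensional K L] (hdeg : Module.finrank K L = 3)
    (v : HeightOneSpectrum (𝓞 K)) (w : HeightOneSpectrum (𝓞 L))
    -- v is inert in L/K and w = 𝔩 O_L is the unique prime above it
    (hw : w.asIdeal = Ideal.map (algebraMap (𝓞 K) (𝓞 L)) v.asIdeal)
    (a b c d : L)
    -- a, b, c are integral at w and d is a unit at w
    (ha : w.valuation L a ≤ 1) (hb : w.valuation L b ≤ 1) (hc : w.valuation L c ≤ 1)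
    (hd : w.valuation L d = 1)
    -- the residues of a/d, b/d, c/d in O_L/𝔏 do not lie in the subfield O_K/𝔩
    (hres : ∀ u ∈ ({a, b, c} : Set L), ¬∃ x : 𝓞 K,
      w.valuation L (u / d - algebraMap K L (algebraMap (𝓞 K) K x)) < 1)
    -- a ≡ b (mod 𝔏)
    (hab : w.valuation L (a - b) < 1)
    -- P is the norm form N_{L/K}(aT0 + bT1 + cT2 + dT3), a cubic form over K
    (P : MvPolynomial (Fin 4) K)
    (hP : MvPolynomial.map (algebraMap K L) P =
      ∏ σ : L ≃ₐ[K] L, (C (σ a) * X 0 + C (σ b) * X 1 + C (σ c) * X 2 + C (σ d) * X 3)) :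
    ∃ t : Fin 4 → v.adicCompletion K, t ≠ 0 ∧ t 0 * t 1 * t 2 = aeval t P := by
  classical
  set F := v.adicCompletion K with hF
  -- Galois invariance of the valuation w
  have hsigma : ∀ (σ : L ≃ₐ[K] L) (u : L), w.valuation L (σ u) = w.valuation L u := by
    intro σ u
    set e := galRestrict (𝓞 K) K L (𝓞 L) σ with he
    refine valuation_map_eq w w e.toAlgHom.toRingHom e.injective σ.toAlgHom.toRingHom
      (fun x => (algebraMap_galRestrict_apply (𝓞 K) σ x).symm) ?_ u
    rw [hw, Ideal.map_map]
    congr 1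
    exact RingHom.ext fun x => e.commutes x
  -- transfer of valuations from K to L (inertness)
  have hinj : Function.Injective (algebraMap (𝓞 K) (𝓞 L)) := by
    intro x y hxy
    have h2 : algebraMap (𝓞 K) L x = algebraMap (𝓞 K) L y := by
      rw [IsScalarTower.algebraMap_apply (𝓞 K) (𝓞 L) L, hxy,
        ← IsScalarTower.algebraMap_apply]
    rw [IsScalarTower.algebraMap_apply (𝓞 K) K L, IsScalarTower.algebraMap_apply (𝓞 K) K L] at h2
    exact IsFractionRing.injective (𝓞 K) K ((algebraMap K L).injective h2)
  have hKL : ∀ k : K, w.valuation L (algebraMap K L k) = v.valuation K k := by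
    refine valuation_map_eq v w (algebraMap (𝓞 K) (𝓞 L)) hinj (algebraMap K L) ?_ hw.symm
    intro x
    rw [← IsScalarTower.algebraMap_apply, ← IsScalarTower.algebraMap_apply]
  have hKF : ∀ k : K, Valued.v ((algebraMap K F) k) = v.valuation K k := by
    intro k
    have h1 : algebraMap K F k = (k : v.adicCompletion K) := rfl
    rw [h1]
    exact IsDedekindDomain.HeightOneSpectrum.valuedAdicCompletion_eq_valuation' v k
  -- the one-variable specialization q(T) = P(1, -1, T, 0)
  set pt : Fin 4 → Polynomial K := ![1, -1, Polynomial.X, 0] with hpt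
  set q : Polynomial K := MvPolynomial.aeval pt P with hq
  set gl : (L ≃ₐ[K] L) → Polynomial L :=
    fun σ => Polynomial.C (σ a - σ b) + Polynomial.C (σ c) * Polynomial.X with hgl
  have hqL : q.map (algebraMap K L) = ∏ σ : L ≃ₐ[K] L, gl σ := by
    have e1 : q.map (algebraMap K L)
        = Polynomial.mapRingHom (algebraMap K L) (MvPolynomial.eval₂ (algebraMap K (Polynomial K)) pt P) := by
      rw [hq, MvPolynomial.aeval_def]; rfl
    rw [e1, MvPolynomial.eval₂_comp_left (Polynomial.mapRingHom (algebraMap K L))]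
    have e2 : (Polynomial.mapRingHom (algebraMap K L)).comp (algebraMap K (Polynomial K))
        = (algebraMap L (Polynomial L)).comp (algebraMap K L) := by
      refine RingHom.ext fun r => ?_
      simp [Polynomial.algebraMap_eq]
    have e3 : (⇑(Polynomial.mapRingHom (algebraMap K L)) ∘ pt)
        = (![1, -1, Polynomial.X, 0] : Fin 4 → Polynomial L) := by
      funext i
      fin_cases i <;> simp [hpt]
    rw [e2, e3, ← MvPolynomial.eval₂_map, ← MvPolynomial.aeval_def, hP, map_prod]
    refine Finset.prod_congr rfl fun σ _ => ?_
    simp only [map_add, map_mul, MvPolynomial.aeval_C, MvPolynomial.aeval_X]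
    simp only [Matrix.cons_val_zero, Matrix.cons_val_one, Matrix.head_cons,
      Matrix.cons_val_two, Matrix.tail_cons, Matrix.cons_val_three, Matrix.head_fin_const]
    rw [hgl]
    simp only [Polynomial.algebraMap_eq, map_sub]
    ring
  -- coefficient bounds over L
  have hsab : ∀ σ : L ≃ₐ[K] L, w.valuation L (σ a - σ b) = w.valuation L (a - b) := by
    intro σ; rw [← map_sub]; exact hsigma σ (a - b)
  have hsc : ∀ σ : L ≃ₐ[K] L, w.valuation L (σ c) = w.valuation L c := fun σ => hsigma σ c
  have hglcoeff : ∀ (σ : L ≃ₐ[K] L) (i : ℕ), w.valuation L ((gl σ).coeff i) ≤ 1 := by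
    intro σ i
    rw [hgl]
    simp only [Polynomial.coeff_add, Polynomial.coeff_C, Polynomial.coeff_C_mul,
      Polynomial.coeff_X]
    match i with
    | 0 => simpa using le_trans (le_of_eq (hsab σ)) (le_of_lt hab)
    | 1 => simpa using le_trans (le_of_eq (hsc σ)) hc
    | (n+2) => simp
  have hprodcoeff : ∀ (s : Finset (L ≃ₐ[K] L)) (i : ℕ),
      w.valuation L ((∏ σ ∈ s, gl σ).coeff i) ≤ 1 := by
    intro s
    refine Finset.prod_induction gl (fun p => ∀ i, w.valuation L (p.coeff i) ≤ 1) ?_ ?_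
      (fun σ _ => hglcoeff σ)
    · intro p r hp hr i
      rw [Polynomial.coeff_mul]
      refine Valuation.map_sum_le _ fun ij _ => ?_
      rw [map_mul]
      exact mul_le_one' (hp ij.1) (hr ij.2)
    · intro i
      rcases eq_or_ne i 0 with rfl | hi
      · simp
      · simp [Polynomial.coeff_one, hi]
  have hcard : Fintype.card (L ≃ₐ[K] L) = 3 := by
    rw [Fintype.card_eq_nat_card, IsGalois.card_aut_eq_finrank, hdeg]
  -- constant coefficient of q over L
  have h0L : w.valuation L ((q.map (algebraMap K L)).coeff 0) < 1 := by
    rw [hqL, Polynomial.coeff_zero_eq_eval_zero, Polynomial.eval_prod]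
    have e4 : ∀ σ : L ≃ₐ[K] L, Polynomial.eval 0 (gl σ) = σ a - σ b := by
      intro σ; rw [hgl]; simp
    rw [Finset.prod_congr rfl fun σ _ => e4 σ, map_prod]
    rw [Finset.prod_congr rfl fun σ (_ : σ ∈ Finset.univ) => hsab σ, Finset.prod_const,
      Finset.card_univ, hcard]
    exact lt_of_le_of_lt ((zm_pow_le_pow (le_of_lt hab) (by omega)).trans_eq (pow_one _)) hab
  -- linear coefficient of q over L
  have h1L : w.valuation L ((q.map (algebraMap K L)).coeff 1) < 1 := by
    have hsplit : q.map (algebraMap K L)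
        = gl 1 * ∏ σ ∈ Finset.univ.erase 1, gl σ := by
      rw [hqL, Finset.mul_prod_erase _ _ (Finset.mem_univ 1)]
    have hrest : ∀ i, w.valuation L ((∏ σ ∈ Finset.univ.erase 1, gl σ).coeff i) ≤ 1 :=
      hprodcoeff _
    have hrest0 : w.valuation L ((∏ σ ∈ Finset.univ.erase 1, gl σ).coeff 0) < 1 := by
      rw [Polynomial.coeff_zero_eq_eval_zero, Polynomial.eval_prod]
      have e4 : ∀ σ : L ≃ₐ[K] L, Polynomial.eval 0 (gl σ) = σ a - σ b := by
        intro σ; rw [hgl]; simp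
      rw [Finset.prod_congr rfl fun σ _ => e4 σ, map_prod,
        Finset.prod_congr rfl fun σ (_ : σ ∈ Finset.univ.erase 1) => hsab σ, Finset.prod_const]
      have hcarde : (Finset.univ.erase (1 : L ≃ₐ[K] L)).card = 2 := by
        rw [Finset.card_erase_of_mem (Finset.mem_univ 1), Finset.card_univ, hcard]
      rw [hcarde]
      exact lt_of_le_of_lt ((zm_pow_le_pow (le_of_lt hab) (by omega)).trans_eq (pow_one _)) hab
    rw [hsplit, Polynomial.coeff_mul]
    refine Valuation.map_sum_lt _ one_ne_zero fun ij hij => ?_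
    have hij' : ij.1 + ij.2 = 1 := Finset.HasAntidiagonal.mem_antidiagonal.mp hij
    have : (ij.1 = 0 ∧ ij.2 = 1) ∨ (ij.1 = 1 ∧ ij.2 = 0) := by omega
    rcases this with ⟨h1, h2⟩ | ⟨h1, h2⟩ <;> rw [h1, h2, map_mul]
    · have hg0 : w.valuation L ((gl 1).coeff 0) < 1 := by
        rw [hgl]
        simpa using lt_of_le_of_lt (le_of_eq (hsab 1)) hab
      calc w.valuation L ((gl 1).coeff 0) * w.valuation L ((∏ σ ∈ Finset.univ.erase 1, gl σ).coeff 1)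
          ≤ w.valuation L ((gl 1).coeff 0) * 1 := mul_le_mul_right (hrest 1) _
        _ = w.valuation L ((gl 1).coeff 0) := mul_one _
        _ < 1 := hg0
    · calc w.valuation L ((gl 1).coeff 1) * w.valuation L ((∏ σ ∈ Finset.univ.erase 1, gl σ).coeff 0)
          ≤ 1 * w.valuation L ((∏ σ ∈ Finset.univ.erase 1, gl σ).coeff 0) :=
            mul_le_mul_left (hglcoeff 1 1) _
        _ = w.valuation L ((∏ σ ∈ Finset.univ.erase 1, gl σ).coeff 0) := one_mul _
        _ < 1 := hrest0
  -- transfer the coefficient facts to K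
  have htr : ∀ i, w.valuation L ((q.map (algebraMap K L)).coeff i) = v.valuation K (q.coeff i) := by
    intro i
    rw [Polynomial.coeff_map]
    exact hKL (q.coeff i)
  have hq0 : v.valuation K (q.coeff 0) < 1 := htr 0 ▸ h0L
  have hq1 : v.valuation K (q.coeff 1) < 1 := htr 1 ▸ h1L
  have hqi : ∀ i, v.valuation K (q.coeff i) ≤ 1 := by
    intro i
    rw [← htr i, hqL]
    exact hprodcoeff _ i
  -- the polynomial f = T + q(T)
  set f : Polynomial K := Polynomial.X + q with hf
  have hfc : ∀ i, v.valuation K (f.coeff i) ≤ 1 := by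
    intro i
    rw [hf, Polynomial.coeff_add]
    refine le_trans (Valuation.map_add _ _ _) (max_le ?_ (hqi i))
    rcases eq_or_ne i 1 with rfl | hi
    · simp
    · rw [Polynomial.coeff_X, if_neg (fun h => hi h.symm), map_zero]
      exact zero_le'
  have hf0 : v.valuation K (f.coeff 0) < 1 := by
    rw [hf, Polynomial.coeff_add, Polynomial.coeff_X_zero, zero_add]
    exact hq0
  have hf1 : v.valuation K (f.coeff 1) = 1 := by
    rw [hf, Polynomial.coeff_add, Polynomial.coeff_X_one, add_comm]
    have := Valuation.map_add_eq_of_lt_right (v.valuation K)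
      (x := q.coeff 1) (y := (1 : K)) (by rw [Valuation.map_one]; exact hq1)
    rw [this, Valuation.map_one]
  -- move to the completion and apply Hensel's lemma
  set fF : Polynomial F := f.map (algebraMap K F) with hfF
  have hcoeffF : ∀ i, Valued.v (fF.coeff i) ≤ 1 := by
    intro i; rw [hfF, Polynomial.coeff_map, hKF]; exact hfc i
  have h0F : Valued.v (fF.eval 0) < 1 := by
    rw [← Polynomial.coeff_zero_eq_eval_zero, hfF, Polynomial.coeff_map, hKF]
    exact hf0
  have h1F : Valued.v (fF.derivative.eval 0) = 1 := by
    rw [← Polynomial.coeff_zero_eq_eval_zero, Polynomial.coeff_derivative]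
    simp only [Nat.cast_zero, zero_add, mul_one]
    rw [hfF, Polynomial.coeff_map, hKF]
    exact hf1
  obtain ⟨ξ, hξ⟩ := hensel_aux fF hcoeffF h0F h1F
  -- assemble the rational point
  refine ⟨![1, -1, ξ, 0], ?_, ?_⟩
  · intro h
    have h0 : (1 : F) = 0 := by
      have := congrFun h 0
      simpa using this
    exact one_ne_zero h0
  · have haeval : MvPolynomial.aeval (![1, -1, ξ, 0] : Fin 4 → F) P
        = (q.map (algebraMap K F)).eval ξ := by
      set k : Polynomial K →+* F :=
        (Polynomial.evalRingHom ξ).comp (Polynomial.mapRingHom (algebraMap K F)) with hk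
      have e5 : (q.map (algebraMap K F)).eval ξ = k q := rfl
      rw [e5, hq, MvPolynomial.aeval_def, MvPolynomial.aeval_def,
        MvPolynomial.eval₂_comp_left k]
      congr 1
      · refine RingHom.ext fun r => ?_
        simp [hk, Polynomial.algebraMap_eq]
      · funext i
        fin_cases i <;> simp [hk, hpt]
    rw [haeval]
    have hfeval : Polynomial.eval ξ (q.map (algebraMap K F)) = -ξ := by
      have : fF = Polynomial.X + q.map (algebraMap K F) := by
        rw [hfF, hf, Polynomial.map_add, Polynomial.map_X]
      rw [this] at hξ
      rw [Polynomial.eval_add, Polynomial.eval_X] at hξ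
      exact eq_neg_of_add_eq_zero_right hξ
    rw [hfeval]
    simp
end

section
/- Let K be a field and let l0, l1, l2, l0', l1', l2' ∈ K[T0, T1, T2, T3] be nonzero linear forms such that l_i is not a scalar multiple of l_j' for any 0 ≤ i, j ≤ 2. Set F := l0·l1·l2 − l0'·l1'·l2'. If x ∈ K⁴ is nonzero, F(x) = 0, all four partial derivatives ∂F/∂T_k vanish at x, and l0(x) = 0, then at least two of the values l0(x), l1(x), l2(x) are zero and at least two of the values l0'(x), l1'(x), l2'(x) are zero. -/
open MvPolynomial

lemma pd_lin {K : Type*} [Field K] (c : Fin 4 → K) (k : Fin 4) :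
    pderiv k (∑ m : Fin 4, C (c m) * X m) = C (c k) := by
  simp [map_sum, pderiv_C_mul, pderiv_X, Pi.single_apply]

lemma ev_lin {K : Type*} [Field K] (c : Fin 4 → K) (x : Fin 4 → K) :
    eval x (∑ m : Fin 4, C (c m) * X m) = ∑ m, c m * x m := by simp

lemma deriv_ev {K : Type*} [Field K] (c : Fin 3 → Fin 4 → K) (x : Fin 4 → K) (k : Fin 4) :
    eval x (pderiv k (∏ j : Fin 3, ∑ m : Fin 4, C (c j m) * X m)) =
      c 0 k * ((∑ m, c 1 m * x m) * (∑ m, c 2 m * x m))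
      + (∑ m, c 0 m * x m) * (c 1 k * (∑ m, c 2 m * x m))
      + (∑ m, c 0 m * x m) * (∑ m, c 1 m * x m) * c 2 k := by
  rw [Fin.prod_univ_three]
  simp only [pderiv_mul, pd_lin, map_add, map_mul, ev_lin, eval_C]
  ring

lemma key_step {K : Type*} [Field K] (a b : Fin 4 → K) (ha : a ≠ 0) (hb : b ≠ 0)
    (hnp : ∀ γ : K, a ≠ γ • b) (A B : K) (h : ∀ k, a k * A = b k * B) : A = 0 ∧ B = 0 := by
  by_cases hA : A = 0
  · refine ⟨hA, ?_⟩
    by_contra hB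
    apply hb; funext k
    have hk := h k; rw [hA, mul_zero] at hk
    have : b k * B = 0 := hk.symm
    simpa using (mul_eq_zero.mp this).resolve_right hB
  · exfalso
    by_cases hB : B = 0
    · apply ha; funext k
      have hk := h k; rw [hB, mul_zero] at hk
      simpa using (mul_eq_zero.mp hk).resolve_right hA
    · apply hnp (B / A)
      funext k
      have hk := h k
      show a k = B / A * b k
      field_simp
      linear_combination hk

/-- **Lemma (singular points of `l0·l1·l2 = l0'·l1'·l2'`).**  Let `K` be a field and let
`l 0, l 1, l 2, l' 0, l' 1, l' 2` be nonzero linear forms in four variables (given by their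
coefficient vectors) such that no `l i` is a scalar multiple of any `l' j`.  Set
`F = l0·l1·l2 − l0'·l1'·l2'`.  If `x ≠ 0`, `F(x) = 0`, all four partial derivatives of `F`
vanish at `x`, and `l0(x) = 0`, then at least two of `l0(x), l1(x), l2(x)` vanish
and at least two of `l0'(x), l1'(x), l2'(x)` vanish. -/
theorem singular_point_on_two_planes
    {K : Type*} [Field K]
    (l l' : Fin 3 → Fin 4 → K)
    (hl : ∀ i, l i ≠ 0) (hl' : ∀ j, l' j ≠ 0)
    (hnp : ∀ i j, ∀ γ : K, l i ≠ γ • l' j)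
    (F : MvPolynomial (Fin 4) K)
    (hF : F = (∏ i : Fin 3, ∑ k : Fin 4, C (l i k) * X k)
            - ∏ j : Fin 3, ∑ k : Fin 4, C (l' j k) * X k)
    (x : Fin 4 → K) (hx : x ≠ 0)
    (hFx : eval x F = 0)
    (hsing : ∀ k : Fin 4, eval x (pderiv k F) = 0)
    (hl0 : ∑ k, l 0 k * x k = 0) :
    (∃ i₁ i₂ : Fin 3, i₁ ≠ i₂ ∧ (∑ k, l i₁ k * x k) = 0 ∧ (∑ k, l i₂ k * x k) = 0) ∧
    (∃ j₁ j₂ : Fin 3, j₁ ≠ j₂ ∧ (∑ k, l' j₁ k * x k) = 0 ∧ (∑ k, l' j₂ k * x k) = 0) := by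
  -- the product of the primed linear forms vanishes at x
  have hprod : (∑ m, l' 0 m * x m) * ((∑ m, l' 1 m * x m) * (∑ m, l' 2 m * x m)) = 0 := by
    rw [hF] at hFx
    simp only [map_sub, Fin.prod_univ_three, map_mul, ev_lin] at hFx
    linear_combination ((∑ m, l 1 m * x m) * (∑ m, l 2 m * x m)) * hl0 - hFx
  -- the first conjunct follows once `l1(x) * l2(x) = 0`
  have first : (∑ m, l 1 m * x m) * (∑ m, l 2 m * x m) = 0 →
      (∃ i₁ i₂ : Fin 3, i₁ ≠ i₂ ∧ (∑ k, l i₁ k * x k) = 0 ∧ (∑ k, l i₂ k * x k) = 0) := by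
    intro hA
    rcases mul_eq_zero.mp hA with h | h
    · exact ⟨0, 1, by decide, hl0, h⟩
    · exact ⟨0, 2, by decide, hl0, h⟩
  have hev : ∀ k : Fin 4,
      (l 0 k * ((∑ m, l 1 m * x m) * (∑ m, l 2 m * x m))
        + (∑ m, l 0 m * x m) * (l 1 k * (∑ m, l 2 m * x m))
        + (∑ m, l 0 m * x m) * (∑ m, l 1 m * x m) * l 2 k)
      - (l' 0 k * ((∑ m, l' 1 m * x m) * (∑ m, l' 2 m * x m))
        + (∑ m, l' 0 m * x m) * (l' 1 k * (∑ m, l' 2 m * x m))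
        + (∑ m, l' 0 m * x m) * (∑ m, l' 1 m * x m) * l' 2 k) = 0 := by
    intro k
    have h := hsing k
    rw [hF] at h
    simpa only [map_sub, deriv_ev] using h
  rcases mul_eq_zero.mp hprod with hp | hp'
  · -- l'0(x) = 0
    have key : ∀ k, l 0 k * ((∑ m, l 1 m * x m) * (∑ m, l 2 m * x m))
        = l' 0 k * ((∑ m, l' 1 m * x m) * (∑ m, l' 2 m * x m)) := by
      intro k
      linear_combination hev k
        - (l 1 k * (∑ m, l 2 m * x m) + (∑ m, l 1 m * x m) * l 2 k) * hl0
        + (l' 1 k * (∑ m, l' 2 m * x m) + (∑ m, l' 1 m * x m) * l' 2 k) * hp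
    obtain ⟨hA, hB⟩ := key_step (l 0) (l' 0) (hl 0) (hl' 0) (hnp 0 0) _ _ key
    refine ⟨first hA, ?_⟩
    rcases mul_eq_zero.mp hB with h | h
    · exact ⟨0, 1, by decide, hp, h⟩
    · exact ⟨0, 2, by decide, hp, h⟩
  · rcases mul_eq_zero.mp hp' with hp | hp
    · -- l'1(x) = 0
      have key : ∀ k, l 0 k * ((∑ m, l 1 m * x m) * (∑ m, l 2 m * x m))
          = l' 1 k * ((∑ m, l' 0 m * x m) * (∑ m, l' 2 m * x m)) := by
        intro k
        linear_combination hev k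
          - (l 1 k * (∑ m, l 2 m * x m) + (∑ m, l 1 m * x m) * l 2 k) * hl0
          + (l' 0 k * (∑ m, l' 2 m * x m) + (∑ m, l' 0 m * x m) * l' 2 k) * hp
      obtain ⟨hA, hB⟩ := key_step (l 0) (l' 1) (hl 0) (hl' 1) (hnp 0 1) _ _ key
      refine ⟨first hA, ?_⟩
      rcases mul_eq_zero.mp hB with h | h
      · exact ⟨1, 0, by decide, hp, h⟩
      · exact ⟨1, 2, by decide, hp, h⟩
    · -- l'2(x) = 0
      have key : ∀ k, l 0 k * ((∑ m, l 1 m * x m) * (∑ m, l 2 m * x m))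
          = l' 2 k * ((∑ m, l' 0 m * x m) * (∑ m, l' 1 m * x m)) := by
        intro k
        linear_combination hev k
          - (l 1 k * (∑ m, l 2 m * x m) + (∑ m, l 1 m * x m) * l 2 k) * hl0
          + (l' 0 k * (∑ m, l' 1 m * x m) + (∑ m, l' 0 m * x m) * l' 1 k) * hp
      obtain ⟨hA, hB⟩ := key_step (l 0) (l' 2) (hl 0) (hl' 2) (hnp 0 2) _ _ key
      refine ⟨first hA, ?_⟩
      rcases mul_eq_zero.mp hB with h | h
      · exact ⟨2, 0, by decide, hp, h⟩
      · exact ⟨2, 1, by decide, hp, h⟩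
end

section
/- Let ℓ be a prime power with ℓ ≡ 1 (mod 3) and let α ∈ F_ℓ^*. Then the cubic surface in P³ over F_ℓ defined by F := T0T1T2 − (1/27)·(αT0 + T1 + α^{-1}T2)³ = 0 has exactly ℓ·(ℓ−1) non-singular F_ℓ-rational points, i.e. exactly ℓ(ℓ−1) points (t0:t1:t2:t3) ∈ P³(F_ℓ) with F(t0,t1,t2,t3) = 0 at which not all four partial derivatives of F vanish. -/
open MvPolynomial

section ConeHelpers
variable {F : Type*} [Field F]

private def ghF (α : F) (v : Fin 4 → F) : F :=
  27*(v 0*(v 1*v 2)) - (α*v 0+v 1+α⁻¹*v 2)^3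
private def gh0 (α : F) (v : Fin 4 → F) : F :=
  9*(v 1*v 2) - α*(α*v 0+v 1+α⁻¹*v 2)^2
private def gh1 (α : F) (v : Fin 4 → F) : F :=
  9*(v 0*v 2) - (α*v 0+v 1+α⁻¹*v 2)^2
private def gh2 (α : F) (v : Fin 4 → F) : F :=
  9*(v 0*v 1) - α⁻¹*(α*v 0+v 1+α⁻¹*v 2)^2
private def wv (α ω t s : F) : Fin 4 → F :=
  ![α⁻¹*(1+t)^3, (1+ω*t)^3, α*(1+ω^2*t)^3, s]

private lemma wv0 (α ω t s : F) : wv α ω t s 0 = α⁻¹*(1+t)^3 := rfl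
private lemma wv1 (α ω t s : F) : wv α ω t s 1 = (1+ω*t)^3 := rfl
private lemma wv2 (α ω t s : F) : wv α ω t s 2 = α*(1+ω^2*t)^3 := rfl
private lemma wv3 (α ω t s : F) : wv α ω t s 3 = s := rfl

private lemma ghF_smul (α c : F) (v : Fin 4 → F) : ghF α (c • v) = c^3 * ghF α v := by
  simp only [ghF, Pi.smul_apply, smul_eq_mul]; ring
private lemma gh0_smul (α c : F) (v : Fin 4 → F) : gh0 α (c • v) = c^2 * gh0 α v := by
  simp only [gh0, Pi.smul_apply, smul_eq_mul]; ring
private lemma gh1_smul (α c : F) (v : Fin 4 → F) : gh1 α (c • v) = c^2 * gh1 α v := by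
  simp only [gh1, Pi.smul_apply, smul_eq_mul]; ring
private lemma gh2_smul (α c : F) (v : Fin 4 → F) : gh2 α (c • v) = c^2 * gh2 α v := by
  simp only [gh2, Pi.smul_apply, smul_eq_mul]; ring

private lemma cone_h1 (ω t : F) (hω : ω^2+ω+1 = 0) :
    (1+t)*((1+ω*t)*(1+ω^2*t)) = 1+t^3 := by
  linear_combination (ω*t^3 + ω*t^2 - t^3 + t)*hω

private lemma cone_h2 (ω t : F) (hω : ω^2+ω+1 = 0) :
    (1+t)^3+(1+ω*t)^3+(1+ω^2*t)^3 = 3*(1+t^3) := by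
  linear_combination (ω^4*t^3 - ω^3*t^3 + 3*ω^2*t^2 + 2*ω*t^3 - 3*ω*t^2 - 2*t^3 + 3*t^2 + 3*t)*hω

private lemma cone_hS (α ω t : F) (hA : α*α⁻¹ = 1) (hω : ω^2+ω+1 = 0) :
    α*(α⁻¹*(1+t)^3)+(1+ω*t)^3+α⁻¹*(α*(1+ω^2*t)^3) = 3*(1+t^3) := by
  linear_combination ((1+t)^3 + (1+ω^2*t)^3)*hA + cone_h2 ω t hω

private lemma cone_hJ0 (ω t : F) (hω : ω^2+ω+1 = 0) :
    (1+ω*t)*(1+ω^2*t) = (1+t)^2 - 3*t := by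
  linear_combination (ω*t^2 - t^2 + t)*hω

private lemma cone_hJ1 (ω t : F) (hω : ω^2+ω+1 = 0) :
    (1+t)*(1+ω^2*t) = (1+ω*t)^2 - 3*(ω*t) := by
  linear_combination t*hω

private lemma cone_hJ2 (ω t : F) (hω : ω^2+ω+1 = 0) :
    (1+t)*(1+ω*t) = (1+ω^2*t)^2 - 3*(ω^2*t) := by
  linear_combination (-(ω^2*t^2) + ω*t^2 + t)*hω

private lemma ghF_wv (α ω t s : F) (hA : α*α⁻¹ = 1) (hω : ω^2+ω+1 = 0) :
    ghF α (wv α ω t s) = 0 := by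
  have h1 := cone_h1 ω t hω
  have h1c : ((1+t)*((1+ω*t)*(1+ω^2*t)))^3 = (1+t^3)^3 := by rw [h1]
  have hS := cone_hS α ω t hA hω
  show 27*((α⁻¹*(1+t)^3)*((1+ω*t)^3*(α*(1+ω^2*t)^3)))
      - (α*(α⁻¹*(1+t)^3)+(1+ω*t)^3+α⁻¹*(α*(1+ω^2*t)^3))^3 = 0
  rw [hS]
  linear_combination (27*((1+t)*((1+ω*t)*(1+ω^2*t)))^3)*hA + 27*h1c

private lemma gh0_wv (α ω t s : F) (hA : α*α⁻¹ = 1) (hω : ω^2+ω+1 = 0) :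
    gh0 α (wv α ω t s) = -(27*α*t*((1+ω*t)*(1+ω^2*t))^2) := by
  have h1 := cone_h1 ω t hω
  have hS := cone_hS α ω t hA hω
  have hJ := cone_hJ0 ω t hω
  show 9*((1+ω*t)^3*(α*(1+ω^2*t)^3))
      - α*(α*(α⁻¹*(1+t)^3)+(1+ω*t)^3+α⁻¹*(α*(1+ω^2*t)^3))^2
      = -(27*α*t*((1+ω*t)*(1+ω^2*t))^2)
  rw [hS]
  linear_combination (9*α*((1+ω*t)*(1+ω^2*t))^2)*hJ
    + (9*α*((1+t)*((1+ω*t)*(1+ω^2*t)) + (1+t^3)))*h1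

private lemma gh1_wv (α ω t s : F) (hA : α*α⁻¹ = 1) (hω : ω^2+ω+1 = 0) :
    gh1 α (wv α ω t s) = -(27*ω*t*((1+t)*(1+ω^2*t))^2) := by
  have h1 := cone_h1 ω t hω
  have hS := cone_hS α ω t hA hω
  have hJ := cone_hJ1 ω t hω
  show 9*((α⁻¹*(1+t)^3)*(α*(1+ω^2*t)^3))
      - (α*(α⁻¹*(1+t)^3)+(1+ω*t)^3+α⁻¹*(α*(1+ω^2*t)^3))^2
      = -(27*ω*t*((1+t)*(1+ω^2*t))^2)
  rw [hS]
  linear_combination (9*((1+t)*(1+ω^2*t))^3)*hA + (9*((1+t)*(1+ω^2*t))^2)*hJ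
    + (9*((1+t)*((1+ω*t)*(1+ω^2*t)) + (1+t^3)))*h1

private lemma gh2_wv (α ω t s : F) (hA : α*α⁻¹ = 1) (hω : ω^2+ω+1 = 0) :
    gh2 α (wv α ω t s) = -(27*ω^2*α⁻¹*t*((1+t)*(1+ω*t))^2) := by
  have h1 := cone_h1 ω t hω
  have hS := cone_hS α ω t hA hω
  have hJ := cone_hJ2 ω t hω
  show 9*((α⁻¹*(1+t)^3)*(1+ω*t)^3)
      - α⁻¹*(α*(α⁻¹*(1+t)^3)+(1+ω*t)^3+α⁻¹*(α*(1+ω^2*t)^3))^2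
      = -(27*ω^2*α⁻¹*t*((1+t)*(1+ω*t))^2)
  rw [hS]
  linear_combination (9*α⁻¹*((1+t)*(1+ω*t))^2)*hJ
    + (9*α⁻¹*((1+t)*((1+ω*t)*(1+ω^2*t)) + (1+t^3)))*h1

private lemma cone_M1 (α ω t : F) (hA : α*α⁻¹ = 1) (hω : ω^2+ω+1 = 0) :
    α*(α⁻¹*(1+t)^3) + ω^2*(1+ω*t)^3 + ω*(α⁻¹*(α*(1+ω^2*t)^3)) = 9*t := by
  linear_combination (ω^7*t^3 + 3*ω^5*t^2 + 3*ω^3*t + ω + t^3 + 3*t^2 + 3*t + 1)*hA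
    + (ω^5*t^3 - ω^4*t^3 + ω^3*t^3 + 3*ω^3*t^2 - ω*t^3 - 3*ω*t^2 + 6*ω*t + t^3 + 3*t^2 - 6*t + 1)*hω

private lemma cone_M2 (α ω t : F) (hA : α*α⁻¹ = 1) (hω : ω^2+ω+1 = 0) :
    α*(α⁻¹*(1+t)^3) + ω*(1+ω*t)^3 + ω^2*(α⁻¹*(α*(1+ω^2*t)^3)) = 9*t^2 := by
  linear_combination (ω^8*t^3 + 3*ω^6*t^2 + 3*ω^4*t + ω^2 + t^3 + 3*t^2 + 3*t + 1)*hA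
    + (ω^6*t^3 - ω^5*t^3 + 3*ω^4*t^2 + ω^3*t^3 - 3*ω^3*t^2 + 3*ω^2*t - ω*t^3 + 6*ω*t^2 - 3*ω*t + t^3 - 6*t^2 + 3*t + 1)*hω

private lemma cone_ab (ω t : F) (h3 : (3:F) ≠ 0) (hω : ω^2+ω+1 = 0) (ha : 1+t = 0) :
    1+ω*t ≠ 0 := by
  intro hb
  have hω1 : ω = 1 := by linear_combination ω*ha - hb
  exact h3 (by linear_combination hω - (ω+2)*hω1)

private lemma cone_ac (ω t : F) (h3 : (3:F) ≠ 0) (hω : ω^2+ω+1 = 0) (ha : 1+t = 0) :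
    1+ω^2*t ≠ 0 := by
  intro hc
  have h2 : ω^2 = 1 := by linear_combination ω^2*ha - hc
  exact h3 (by linear_combination (ω-1)*h2 - (ω-2)*hω)

private lemma cone_bc (ω t : F) (h3 : (3:F) ≠ 0) (hω : ω^2+ω+1 = 0) (hb : 1+ω*t = 0) :
    1+ω^2*t ≠ 0 := by
  intro hc
  have e1 : ω*t = -1 := by linear_combination hb
  have e2 : ω^2*t = -1 := by linear_combination hc
  have hω1 : ω = 1 := by linear_combination ω*e1 - e2
  exact h3 (by linear_combination hω - (ω+2)*hω1)

private lemma wv_ne_zero (α ω t s : F) (hα : α ≠ 0) (h3 : (3:F) ≠ 0)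
    (hω : ω^2+ω+1 = 0) : wv α ω t s ≠ 0 := by
  intro h
  have h0 : α⁻¹*(1+t)^3 = (0:F) := congrFun h 0
  have h1 : (1+ω*t)^3 = (0:F) := congrFun h 1
  have ha : 1+t = 0 := by
    rcases mul_eq_zero.mp h0 with h'|h'
    · exact absurd h' (inv_ne_zero hα)
    · exact pow_eq_zero_iff (by norm_num : 3 ≠ 0) |>.mp h'
  have hb : 1+ω*t = 0 := pow_eq_zero_iff (by norm_num : 3 ≠ 0) |>.mp h1
  exact cone_ab ω t h3 hω ha hb

private lemma cone_wv_prop (α ω t s : F) (hα : α ≠ 0) (h3 : (3:F) ≠ 0)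
    (hω : ω^2+ω+1 = 0) (ht : t ≠ 0) :
    ghF α (wv α ω t s) = 0 ∧
      (gh0 α (wv α ω t s) ≠ 0 ∨ gh1 α (wv α ω t s) ≠ 0 ∨ gh2 α (wv α ω t s) ≠ 0) := by
  have hA : α*α⁻¹ = 1 := mul_inv_cancel₀ hα
  have h9 : (9:F) ≠ 0 := by
    have := mul_ne_zero h3 h3; rwa [show (3:F)*3 = 9 by norm_num] at this
  have h27 : (27:F) ≠ 0 := by
    have := mul_ne_zero h3 h9; rwa [show (3:F)*9 = 27 by norm_num] at this
  have hωne : ω ≠ 0 := by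
    intro h; rw [h] at hω; simp at hω
  refine ⟨ghF_wv α ω t s hA hω, ?_⟩
  by_cases ha : (1+t) = 0
  · left
    rw [gh0_wv α ω t s hA hω]
    have hb := cone_ab ω t h3 hω ha
    have hc := cone_ac ω t h3 hω ha
    exact neg_ne_zero.mpr (mul_ne_zero (mul_ne_zero (mul_ne_zero h27 hα) ht)
      (pow_ne_zero _ (mul_ne_zero hb hc)))
  · by_cases hb : (1+ω*t) = 0
    · right; left
      rw [gh1_wv α ω t s hA hω]
      have hc := cone_bc ω t h3 hω hb
      exact neg_ne_zero.mpr (mul_ne_zero (mul_ne_zero (mul_ne_zero h27 hωne) ht)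
        (pow_ne_zero _ (mul_ne_zero ha hc)))
    · right; right
      rw [gh2_wv α ω t s hA hω]
      exact neg_ne_zero.mpr (mul_ne_zero (mul_ne_zero (mul_ne_zero
        (mul_ne_zero h27 (pow_ne_zero _ hωne)) (inv_ne_zero hα)) ht)
        (pow_ne_zero _ (mul_ne_zero ha hb)))

private lemma cone_surj_core (α ω : F) (hα : α ≠ 0) (h3 : (3:F) ≠ 0)
    (hω : ω^2+ω+1 = 0) (v : Fin 4 → F) (hG : ghF α v = 0)
    (hD : gh0 α v ≠ 0 ∨ gh1 α v ≠ 0 ∨ gh2 α v ≠ 0) :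
    ∃ t l s : F, t ≠ 0 ∧ l ≠ 0 ∧ v = l • wv α ω t s := by
  have hA : α*α⁻¹ = 1 := mul_inv_cancel₀ hα
  have hαi : α⁻¹ ≠ 0 := inv_ne_zero hα
  have h9 : (9:F) ≠ 0 := by
    have := mul_ne_zero h3 h3; rwa [show (3:F)*3 = 9 by norm_num] at this
  have hG' : 27*(v 0*(v 1*v 2)) - (α*v 0+v 1+α⁻¹*v 2)^3 = 0 := hG
  obtain ⟨m0, hm0⟩ : ∃ m, m = α*v 0+v 1+α⁻¹*v 2 := ⟨_, rfl⟩
  obtain ⟨m1, hm1⟩ : ∃ m, m = α*v 0+ω^2*v 1+ω*(α⁻¹*v 2) := ⟨_, rfl⟩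
  obtain ⟨m2, hm2⟩ : ∃ m, m = α*v 0+ω*v 1+ω^2*(α⁻¹*v 2) := ⟨_, rfl⟩
  have hv0 : 3*(α*v 0) = m0+m1+m2 := by
    rw [hm0, hm1, hm2]; linear_combination (-(α⁻¹*v 2) - v 1)*hω
  have hv1 : 3*(v 1) = m0+ω*m1+ω^2*m2 := by
    rw [hm0, hm1, hm2]
    linear_combination (-(ω^2*(α⁻¹*v 2)) + ω*(α⁻¹*v 2) - 2*ω*v 1 - α*v 0 - α⁻¹*v 2 + 2*v 1)*hω
  have hv2 : 3*(α⁻¹*v 2) = m0+ω^2*m1+ω*m2 := by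
    rw [hm0, hm1, hm2]
    linear_combination (-(ω^2*v 1) - 2*ω*(α⁻¹*v 2) + ω*v 1 - α*v 0 + 2*(α⁻¹*v 2) - v 1)*hω
  have hG'' : 27*(v 0*(v 1*v 2)) = m0^3 := by rw [hm0]; linear_combination hG'
  have key : (m0+m1+m2)*((m0+ω*m1+ω^2*m2)*(m0+ω^2*m1+ω*m2))
      = m0^3+m1^3+m2^3-3*(m0*(m1*m2)) := by
    linear_combination (ω^2*m0*m1*m2 + ω^2*m1^2*m2 + ω^2*m1*m2^2 + ω*m0*m1^2 - ω*m0*m1*m2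
      + ω*m0*m2^2 + ω*m1^3 + ω*m2^3 + m0^2*m1 + m0^2*m2 + 3*m0*m1*m2 - m1^3 - m2^3)*hω
  have prod : (3*(α*v 0))*((3*(v 1))*(3*(α⁻¹*v 2)))
      = (m0+m1+m2)*((m0+ω*m1+ω^2*m2)*(m0+ω^2*m1+ω*m2)) := by
    rw [hv0, hv1, hv2]
  have hR : m1^3+m2^3 = 3*(m0*(m1*m2)) := by
    linear_combination hG'' - key - prod + (27*(v 0*(v 1*v 2)))*hA
  have hm1ne : m1 ≠ 0 := by
    intro h1
    have h2 : m2 = 0 := by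
      have h : m2^3 = 0 := by linear_combination hR - (m1^2 - 3*(m0*m2))*h1
      exact pow_eq_zero_iff (by norm_num : 3 ≠ 0) |>.mp h
    have e0 : 3*(α*v 0) = m0 := by linear_combination hv0 + h1 + h2
    have e1 : 3*(v 1) = m0 := by linear_combination hv1 + ω*h1 + ω^2*h2
    have e2 : 3*(α⁻¹*v 2) = m0 := by linear_combination hv2 + ω^2*h1 + ω*h2
    have z0 : gh0 α v = 0 := by
      show 9*(v 1*v 2) - α*(α*v 0+v 1+α⁻¹*v 2)^2 = 0
      rw [← hm0]
      have e12 : (3*(v 1))*(3*(α⁻¹*v 2)) = m0*m0 := by rw [e1, e2]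
      linear_combination α*e12 - (9*(v 1*v 2))*hA
    have z1 : gh1 α v = 0 := by
      show 9*(v 0*v 2) - (α*v 0+v 1+α⁻¹*v 2)^2 = 0
      rw [← hm0]
      have e02 : (3*(α*v 0))*(3*(α⁻¹*v 2)) = m0*m0 := by rw [e0, e2]
      linear_combination e02 - (9*(v 0*v 2))*hA
    have z2 : gh2 α v = 0 := by
      show 9*(v 0*v 1) - α⁻¹*(α*v 0+v 1+α⁻¹*v 2)^2 = 0
      rw [← hm0]
      have e01 : (3*(α*v 0))*(3*(v 1)) = m0*m0 := by rw [e0, e1]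
      linear_combination α⁻¹*e01 - (9*(v 0*v 1))*hA
    rcases hD with h|h|h
    exacts [h z0, h z1, h z2]
  have hm2ne : m2 ≠ 0 := by
    intro h2
    apply hm1ne
    have h : m1^3 = 0 := by linear_combination hR - (m2^2 - 3*(m0*m1))*h2
    exact pow_eq_zero_iff (by norm_num : 3 ≠ 0) |>.mp h
  have h9m2 : (9:F)*m2 ≠ 0 := mul_ne_zero h9 hm2ne
  refine ⟨m2/m1, m1^2/(9*m2), v 3/(m1^2/(9*m2)),
    div_ne_zero hm2ne hm1ne, div_ne_zero (pow_ne_zero 2 hm1ne) h9m2, ?_⟩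
  set t := m2/m1 with htdef
  set l := m1^2/(9*m2) with hldef
  have htne : t ≠ 0 := div_ne_zero hm2ne hm1ne
  have hlne : l ≠ 0 := div_ne_zero (pow_ne_zero 2 hm1ne) h9m2
  have ht : m1*t = m2 := by rw [htdef]; field_simp
  have hl : 9*m2*l = m1^2 := by rw [hldef]; field_simp
  have hcan : ((9*m2)*m1^3) ≠ 0 := mul_ne_zero h9m2 (pow_ne_zero 3 hm1ne)
  have T0 : ((9*m2)*m1^3)*(3*(α*v 0)) = ((9*m2)*m1^3)*(3*(l*(1+t)^3)) := by
    rw [hv0]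
    linear_combination (-(27*l*m1^2*m2*t^2) - 81*l*m1^2*m2*t - 81*l*m1^2*m2 - 27*l*m1*m2^2*t
      - 81*l*m1*m2^2 - 27*l*m2^3)*ht + (-(3*m1^3) - 9*m1^2*m2 - 9*m1*m2^2 - 3*m2^3)*hl
      + (-(3*m1^2))*hR
  have T1 : ((9*m2)*m1^3)*(3*(v 1)) = ((9*m2)*m1^3)*(3*(l*(1+ω*t)^3)) := by
    rw [hv1]
    linear_combination (-(27*ω*l*m1^3*m2*t^3) + 27*l*m1^3*m2*t^3 - 81*l*m1^3*m2*t^2 + 9*m1^3*m2^2)*hω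
      + (81*ω*l*m1^2*m2*t - 81*ω*l*m1^2*m2 + 81*ω*l*m1*m2^2 - 27*l*m1^2*m2*t^2 + 81*l*m1^2*m2*t
        - 27*l*m1*m2^2*t + 81*l*m1*m2^2 - 27*l*m2^3)*ht
      + (-(9*ω*m1^2*m2) + 9*ω*m1*m2^2 - 3*m1^3 + 9*m1*m2^2 - 3*m2^3)*hl
      + (-(3*m1^2))*hR
  have T2 : ((9*m2)*m1^3)*(3*(α⁻¹*v 2)) = ((9*m2)*m1^3)*(3*(l*(1+ω^2*t)^3)) := by
    rw [hv2]
    linear_combination (-(27*ω^4*l*m1^3*m2*t^3) + 27*ω^3*l*m1^3*m2*t^3 - 81*ω^2*l*m1^3*m2*t^2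
      - 27*ω*l*m1^3*m2*t^3 + 81*ω*l*m1^3*m2*t^2 + 27*l*m1^3*m2*t^3 - 81*l*m1^3*m2*t + 9*m1^4*m2)*hω
      + (-(81*ω*l*m1^2*m2*t) + 81*ω*l*m1^2*m2 - 81*ω*l*m1*m2^2 - 27*l*m1^2*m2*t^2 + 81*l*m1^2*m2
        - 27*l*m1*m2^2*t - 27*l*m2^3)*ht
      + (9*ω*m1^2*m2 - 9*ω*m1*m2^2 - 3*m1^3 + 9*m1^2*m2 - 3*m2^3)*hl
      + (-(3*m1^2))*hR
  have c0 : α*v 0 = l*(1+t)^3 := mul_left_cancel₀ h3 (mul_left_cancel₀ hcan T0)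
  have c1 : v 1 = l*(1+ω*t)^3 := mul_left_cancel₀ h3 (mul_left_cancel₀ hcan T1)
  have c2 : α⁻¹*v 2 = l*(1+ω^2*t)^3 := mul_left_cancel₀ h3 (mul_left_cancel₀ hcan T2)
  have f0 : v 0 = l*(α⁻¹*(1+t)^3) := by
    apply mul_left_cancel₀ hα
    linear_combination c0 - (l*(1+t)^3)*hA
  have f2 : v 2 = l*(α*(1+ω^2*t)^3) := by
    apply mul_left_cancel₀ hαi
    linear_combination c2 - (l*(1+ω^2*t)^3)*hA
  have f3 : v 3 = l*(v 3/l) := by field_simp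
  funext i
  fin_cases i
  · exact f0
  · exact c1
  · exact f2
  · exact f3

private lemma cone_inj_core (α ω : F) (hα : α ≠ 0) (h3 : (3:F) ≠ 0)
    (hω : ω^2+ω+1 = 0) (t₁ s₁ t₂ s₂ : F) (ht₁ : t₁ ≠ 0)
    (c : F) (hc : c • wv α ω t₂ s₂ = wv α ω t₁ s₁) : t₁ = t₂ ∧ s₁ = s₂ := by
  have hA : α*α⁻¹ = 1 := mul_inv_cancel₀ hα
  have h9 : (9:F) ≠ 0 := by
    have := mul_ne_zero h3 h3; rwa [show (3:F)*3 = 9 by norm_num] at this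
  have hc0 : c*(α⁻¹*(1+t₂)^3) = α⁻¹*(1+t₁)^3 := congrFun hc 0
  have hc1 : c*(1+ω*t₂)^3 = (1+ω*t₁)^3 := congrFun hc 1
  have hc2 : c*(α*(1+ω^2*t₂)^3) = α*(1+ω^2*t₁)^3 := congrFun hc 2
  have hc3 : c*s₂ = s₁ := congrFun hc 3
  have h1 : c*(9*t₂) = 9*t₁ := by
    linear_combination α*hc0 + ω^2*hc1 + ω*(α⁻¹*hc2)
      - c*(cone_M1 α ω t₂ hA hω) + cone_M1 α ω t₁ hA hω
  have h2 : c*(9*t₂^2) = 9*t₁^2 := by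
    linear_combination α*hc0 + ω*hc1 + ω^2*(α⁻¹*hc2)
      - c*(cone_M2 α ω t₂ hA hω) + cone_M2 α ω t₁ hA hω
  have ht12 : t₁ = t₂ := by
    have e : (9*t₁)*t₁ = (9*t₁)*t₂ := by linear_combination t₂*h1 - h2
    exact mul_left_cancel₀ (mul_ne_zero h9 ht₁) e
  have hcone : c = 1 := by
    rw [← ht12] at h1
    exact mul_right_cancel₀ (mul_ne_zero h9 ht₁) (by rw [one_mul]; exact h1)
  refine ⟨ht12, ?_⟩
  rw [← hc3, hcone, one_mul]

end ConeHelpers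

/-- **Counting lemma.**  Let `F` be the finite field with `ℓ` elements, `ℓ ≡ 1 (mod 3)`, and
let `α ∈ F^*`.  The cone `T0T1T2 − (1/27)(αT0 + T1 + α⁻¹T2)³ = 0` in `P³` over `F` has
exactly `ℓ(ℓ−1)` non-singular `F`-rational points. -/
theorem count_nonsingular_points_of_cone
    {F : Type*} [Field F] [Fintype F] (hcard : Fintype.card F % 3 = 1)
    (α : F) (hα : α ≠ 0)
    (f : MvPolynomial (Fin 4) F)
    (hf : f = X 0 * X 1 * X 2 -
      C (27 : F)⁻¹ * (C α * X 0 + X 1 + C α⁻¹ * X 2) ^ 3) :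
    Nat.card {x : Projectivization F (Fin 4 → F) //
        eval x.rep f = 0 ∧ ∃ k : Fin 4, eval x.rep (pderiv k f) ≠ 0} =
      Fintype.card F * (Fintype.card F - 1) := by
  classical
  -- a primitive cube root of unity
  obtain ⟨u, hu⟩ : ∃ u : Fˣ, orderOf u = 3 := by
    haveI : Fintype Fˣ := Fintype.ofFinite _
    haveI : Fact (Nat.Prime 3) := ⟨by norm_num⟩
    refine exists_prime_orderOf_dvd_card 3 ?_
    have h1 : Fintype.card Fˣ = Fintype.card F - 1 := by
      rw [← Nat.card_eq_fintype_card, Nat.card_units, Nat.card_eq_fintype_card]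
    have h2 : 0 < Fintype.card F := Fintype.card_pos
    omega
  set ω : F := (u : F) with hωdef
  have hω3 : ω^3 = 1 := by
    have hu3 : u^3 = 1 := by rw [← hu]; exact pow_orderOf_eq_one u
    rw [hωdef, ← Units.val_pow_eq_pow_val, hu3, Units.val_one]
  have hωne1 : ω ≠ 1 := by
    intro h
    have hu1 : u = 1 := Units.ext (by rw [← hωdef]; simpa using h)
    rw [hu1, orderOf_one] at hu
    exact absurd hu (by norm_num)
  have hω : ω^2+ω+1 = 0 := by
    have hfac : (ω - 1)*(ω^2+ω+1) = 0 := by linear_combination hω3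
    rcases mul_eq_zero.mp hfac with h'|h'
    · exact absurd (by linear_combination h' : ω = 1) hωne1
    · exact h'
  have h3 : (3:F) ≠ 0 := by
    intro h
    apply hωne1
    have hsq : (ω-1)^2 = 0 := by linear_combination hω - ω*h
    have := pow_eq_zero_iff (by norm_num : 2 ≠ 0) |>.mp hsq
    linear_combination this
  have hA : α*α⁻¹ = 1 := mul_inv_cancel₀ hα
  have h9 : (9:F) ≠ 0 := by
    have := mul_ne_zero h3 h3; rwa [show (3:F)*3 = 9 by norm_num] at this
  have h27 : (27:F) ≠ 0 := by
    have := mul_ne_zero h3 h9; rwa [show (3:F)*9 = 27 by norm_num] at this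
  have h27A : (27:F)*(27:F)⁻¹ = 1 := mul_inv_cancel₀ h27
  have h9A : (9:F)*(9:F)⁻¹ = 1 := mul_inv_cancel₀ h9
  -- evaluation bridges
  have hev : ∀ v : Fin 4 → F, eval v f = 27⁻¹ * ghF α v := by
    intro v
    have hgh : ghF α v = 27*(v 0*(v 1*v 2)) - (α*v 0+v 1+α⁻¹*v 2)^3 := rfl
    rw [hf, hgh]
    simp only [map_sub, map_mul, map_pow, map_add, eval_C, eval_X]
    linear_combination (-(v 0*(v 1*v 2)))*h27A
  have hev0 : ∀ v : Fin 4 → F, eval v (pderiv 0 f) = 9⁻¹ * gh0 α v := by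
    intro v
    have hgh : gh0 α v = 9*(v 1*v 2) - α*(α*v 0+v 1+α⁻¹*v 2)^2 := rfl
    rw [hf, hgh]
    simp [pderiv_mul, pderiv_pow, pderiv_X]
    field_simp
    ring
  have hev1 : ∀ v : Fin 4 → F, eval v (pderiv 1 f) = 9⁻¹ * gh1 α v := by
    intro v
    have hgh : gh1 α v = 9*(v 0*v 2) - (α*v 0+v 1+α⁻¹*v 2)^2 := rfl
    rw [hf, hgh]
    simp [pderiv_mul, pderiv_pow, pderiv_X]
    field_simp
    ring
  have hev2 : ∀ v : Fin 4 → F, eval v (pderiv 2 f) = 9⁻¹ * gh2 α v := by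
    intro v
    have hgh : gh2 α v = 9*(v 0*v 1) - α⁻¹*(α*v 0+v 1+α⁻¹*v 2)^2 := rfl
    rw [hf, hgh]
    simp [pderiv_mul, pderiv_pow, pderiv_X]
    field_simp
    ring
  have hev3 : ∀ v : Fin 4 → F, eval v (pderiv 3 f) = 0 := by
    intro v
    rw [hf]
    simp [pderiv_mul, pderiv_pow, pderiv_X]
  have h27i : (27:F)⁻¹ ≠ 0 := inv_ne_zero h27
  have h9i : (9:F)⁻¹ ≠ 0 := inv_ne_zero h9
  have hiff : ∀ x : Projectivization F (Fin 4 → F),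
      (eval x.rep f = 0 ∧ ∃ k : Fin 4, eval x.rep (pderiv k f) ≠ 0) ↔
      (ghF α x.rep = 0 ∧
        (gh0 α x.rep ≠ 0 ∨ gh1 α x.rep ≠ 0 ∨ gh2 α x.rep ≠ 0)) := by
    intro x
    constructor
    · rintro ⟨h1, k, hk⟩
      refine ⟨?_, ?_⟩
      · rw [hev] at h1
        exact (mul_eq_zero.mp h1).resolve_left h27i
      · fin_cases k
        · exact Or.inl fun h => hk ((hev0 x.rep).trans (by rw [h, mul_zero]))
        · exact Or.inr (Or.inl fun h => hk ((hev1 x.rep).trans (by rw [h, mul_zero])))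
        · exact Or.inr (Or.inr fun h => hk ((hev2 x.rep).trans (by rw [h, mul_zero])))
        · exact absurd (hev3 x.rep) hk
    · rintro ⟨h1, hD⟩
      refine ⟨by rw [hev, h1, mul_zero], ?_⟩
      rcases hD with h|h|h
      · exact ⟨0, by rw [hev0]; exact mul_ne_zero h9i h⟩
      · exact ⟨1, by rw [hev1]; exact mul_ne_zero h9i h⟩
      · exact ⟨2, by rw [hev2]; exact mul_ne_zero h9i h⟩
  -- the bijection
  let φ : Fˣ × F → {x : Projectivization F (Fin 4 → F) //
      eval x.rep f = 0 ∧ ∃ k : Fin 4, eval x.rep (pderiv k f) ≠ 0} :=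
    fun p => ⟨Projectivization.mk F (wv α ω (p.1 : F) p.2)
        (wv_ne_zero α ω (p.1 : F) p.2 hα h3 hω), by
      apply (hiff _).mpr
      set x := Projectivization.mk F (wv α ω (p.1 : F) p.2)
        (wv_ne_zero α ω (p.1 : F) p.2 hα h3 hω) with hx
      obtain ⟨a, ha⟩ := (Projectivization.mk_eq_mk_iff F x.rep (wv α ω (p.1 : F) p.2)
        (Projectivization.rep_nonzero x) (wv_ne_zero α ω (p.1 : F) p.2 hα h3 hω)).mp
        (Projectivization.mk_rep x)
      obtain ⟨hz, hd⟩ := cone_wv_prop α ω (p.1 : F) p.2 hα h3 hω (Units.ne_zero p.1)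
      rw [← ha, Units.smul_def]
      constructor
      · rw [ghF_smul, hz, mul_zero]
      · have hane : ((a:F))^2 ≠ 0 := pow_ne_zero _ (Units.ne_zero a)
        rcases hd with h|h|h
        · exact Or.inl (by rw [gh0_smul]; exact mul_ne_zero hane h)
        · exact Or.inr (Or.inl (by rw [gh1_smul]; exact mul_ne_zero hane h))
        · exact Or.inr (Or.inr (by rw [gh2_smul]; exact mul_ne_zero hane h))⟩
  have hinj : Function.Injective φ := by
    rintro ⟨t₁, s₁⟩ ⟨t₂, s₂⟩ hpq
    have hmk : Projectivization.mk F (wv α ω (t₁ : F) s₁) (wv_ne_zero _ _ _ _ hα h3 hω)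
        = Projectivization.mk F (wv α ω (t₂ : F) s₂) (wv_ne_zero _ _ _ _ hα h3 hω) :=
      congrArg Subtype.val hpq
    obtain ⟨c, hc⟩ := (Projectivization.mk_eq_mk_iff F _ _ _ _).mp hmk
    rw [Units.smul_def] at hc
    obtain ⟨ht, hs⟩ := cone_inj_core α ω hα h3 hω (t₁ : F) s₁ (t₂ : F) s₂
      (Units.ne_zero t₁) (c : F) hc
    exact Prod.ext (Units.ext ht) hs
  have hsurj : Function.Surjective φ := by
    rintro ⟨x, hx⟩
    obtain ⟨hG, hD⟩ := (hiff x).mp hx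
    obtain ⟨t, l, s, htne, hlne, hveq⟩ := cone_surj_core α ω hα h3 hω x.rep hG hD
    have hmk : Projectivization.mk F x.rep (Projectivization.rep_nonzero x)
        = Projectivization.mk F (wv α ω t s) (wv_ne_zero α ω t s hα h3 hω) := by
      rw [Projectivization.mk_eq_mk_iff]
      exact ⟨Units.mk0 l hlne, by rw [Units.smul_def]; exact hveq.symm⟩
    refine ⟨(⟨Units.mk0 t htne, s⟩ : Fˣ × F), ?_⟩
    apply Subtype.ext
    show Projectivization.mk F (wv α ω ((Units.mk0 t htne : Fˣ) : F) s) _ = x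
    exact (hmk.symm.trans (Projectivization.mk_rep x) :)
  have hcardeq : Nat.card {x : Projectivization F (Fin 4 → F) //
      eval x.rep f = 0 ∧ ∃ k : Fin 4, eval x.rep (pderiv k f) ≠ 0}
      = Nat.card (Fˣ × F) := (Nat.card_eq_of_bijective φ ⟨hinj, hsurj⟩).symm
  rw [hcardeq, Nat.card_prod, Nat.card_units, Nat.card_eq_fintype_card]
  exact Nat.mul_comm _ _
end

section
/- Let p ≠ 3 be a prime number and let F := 27·T0T1T2 − (T0 + T1 + T2)³ ∈ F_p[T0, T1, T2]. Then: (1) a nonzero point (t0, t1, t2) with coordinates in an algebraic closure of F_p satisfies F(t0,t1,t2) = 0 together with the vanishing of all three partial derivatives of F if and only if (t0, t1, t2) is a scalar multiple of (1, 1, 1); (2) expanding around this singular point, F(1+u, 1+v, 1) = −9(u² − uv + v²) − (u+v)³, and the binary quadratic form u² − uv + v² factors into two non-proportional linear forms over F_p if and only if p ≡ 1 (mod 3). In particular, the curve C ⊂ P² over F_p defined by F = 0 has a node at (1:1:1) as its unique singular point, whose two tangent directions are F_p-rational if and only if p ≡ 1 (mod 3). -/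
open MvPolynomial

private lemma pd_lemma {R : Type*} [CommRing R] (f : MvPolynomial (Fin 3) R)
    (hf : f = C 27 * (X 0 * X 1 * X 2) - (X 0 + X 1 + X 2) ^ 3) :
    pderiv 0 f = C 27 * (X 1 * X 2) - 3 * (X 0 + X 1 + X 2)^2 ∧
    pderiv 1 f = C 27 * (X 0 * X 2) - 3 * (X 0 + X 1 + X 2)^2 ∧
    pderiv 2 f = C 27 * (X 0 * X 1) - 3 * (X 0 + X 1 + X 2)^2 := by
  have hne : ∀ i j : Fin 3, i ≠ j → pderiv j (X i : MvPolynomial (Fin 3) R) = 0 :=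
    fun i j h => pderiv_X_of_ne h
  refine ⟨?_, ?_, ?_⟩ <;>
    simp only [hf, map_sub, map_mul, Derivation.leibniz, Derivation.leibniz_pow,
      pderiv_X_self, pderiv_C, hne 0 1 (by decide), hne 0 2 (by decide),
      hne 1 0 (by decide), hne 1 2 (by decide), hne 2 0 (by decide), hne 2 1 (by decide),
      map_add, smul_eq_mul, mul_zero, zero_mul, mul_one, one_mul, add_zero, zero_add,
      nsmul_eq_mul] <;>
    ring

/-- **Lemma (the nodal cubic `27T0T1T2 = (T0+T1+T2)³`).**  Let `p ≠ 3` be a prime and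
`F = 27T0T1T2 − (T0+T1+T2)³` over `F_p = ZMod p`.  (1) A nonzero point over an algebraic
closure is a singular point of `F = 0` iff it is a scalar multiple of `(1,1,1)`.
(2) One has the expansion `F(1+u, 1+v, 1) = −9(u² − uv + v²) − (u+v)³`, and the quadratic
form `u² − uv + v²` factors into two non-proportional linear forms over `F_p` iff
`p ≡ 1 (mod 3)`. -/
theorem nodal_cubic_singular_point_and_tangents
    (p : ℕ) [Fact (Nat.Prime p)] (hp3 : p ≠ 3)
    (f : MvPolynomial (Fin 3) (ZMod p))
    (hf : f = C 27 * (X 0 * X 1 * X 2) - (X 0 + X 1 + X 2) ^ 3) :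
    (∀ t : Fin 3 → AlgebraicClosure (ZMod p), t ≠ 0 →
      ((eval t (MvPolynomial.map (algebraMap (ZMod p) (AlgebraicClosure (ZMod p))) f) = 0 ∧
        ∀ k : Fin 3, eval t (pderiv k
          (MvPolynomial.map (algebraMap (ZMod p) (AlgebraicClosure (ZMod p))) f)) = 0) ↔
        ∃ c : AlgebraicClosure (ZMod p), t = fun _ => c)) ∧
    ((C 27 * ((1 + X 0) * (1 + X 1) * 1) - ((1 + X 0) + (1 + X 1) + 1) ^ 3 :
        MvPolynomial (Fin 2) (ZMod p))
        = -(C 9) * (X 0 ^ 2 - X 0 * X 1 + X 1 ^ 2) - (X 0 + X 1) ^ 3) ∧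
    ((∃ a b a' b' : ZMod p,
        (X 0 ^ 2 - X 0 * X 1 + X 1 ^ 2 : MvPolynomial (Fin 2) (ZMod p)) =
          (C a * X 0 + C b * X 1) * (C a' * X 0 + C b' * X 1) ∧
        ∀ γ : ZMod p, (a', b') ≠ (γ * a, γ * b)) ↔ p % 3 = 1) := by
  have hp := (Fact.out : Nat.Prime p)
  -- 3 ≠ 0 in ZMod p and in the algebraic closure
  have hp3' : ¬ (p ∣ 3) := by
    intro h
    rcases (Nat.prime_dvd_prime_iff_eq hp (by norm_num)).mp h with h'
    exact hp3 h'
  refine ⟨?_, ?_, ?_⟩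
  · -- Part 1
    intro t ht
    have h3K : (3 : AlgebraicClosure (ZMod p)) ≠ 0 := by
      intro h
      have : ((3 : ℕ) : AlgebraicClosure (ZMod p)) = 0 := by exact_mod_cast h
      exact hp3' ((CharP.cast_eq_zero_iff (AlgebraicClosure (ZMod p)) p 3).mp this)
    have h9K : (9 : AlgebraicClosure (ZMod p)) ≠ 0 := by
      intro h; apply h3K
      have : (3 : AlgebraicClosure (ZMod p)) * 3 = 0 := by linear_combination h
      rcases mul_eq_zero.mp this with h' | h' <;> exact h'
    have hg : MvPolynomial.map (algebraMap (ZMod p) (AlgebraicClosure (ZMod p))) f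
        = C 27 * (X 0 * X 1 * X 2) - (X 0 + X 1 + X 2) ^ 3 := by
      simp [hf, map_ofNat]
    obtain ⟨hd0, hd1, hd2⟩ := pd_lemma _ hg
    have he : eval t (MvPolynomial.map (algebraMap (ZMod p) (AlgebraicClosure (ZMod p))) f)
        = 27 * (t 0 * t 1 * t 2) - (t 0 + t 1 + t 2)^3 := by
      rw [hg]; simp [map_ofNat]
    have he0 : eval t (pderiv 0 (MvPolynomial.map (algebraMap (ZMod p) (AlgebraicClosure (ZMod p))) f))
        = 27 * (t 1 * t 2) - 3 * (t 0 + t 1 + t 2)^2 := by rw [hd0]; simp [map_ofNat]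
    have he1 : eval t (pderiv 1 (MvPolynomial.map (algebraMap (ZMod p) (AlgebraicClosure (ZMod p))) f))
        = 27 * (t 0 * t 2) - 3 * (t 0 + t 1 + t 2)^2 := by rw [hd1]; simp [map_ofNat]
    have he2 : eval t (pderiv 2 (MvPolynomial.map (algebraMap (ZMod p) (AlgebraicClosure (ZMod p))) f))
        = 27 * (t 0 * t 1) - 3 * (t 0 + t 1 + t 2)^2 := by rw [hd2]; simp [map_ofNat]
    constructor
    · rintro ⟨h0, hk⟩
      rw [he] at h0
      have e0 := hk 0; rw [he0] at e0
      have e1 := hk 1; rw [he1] at e1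
      have e2 := hk 2; rw [he2] at e2
      -- 9 * (pairwise products) = s^2
      have q0 : (9 : AlgebraicClosure (ZMod p)) * (t 1 * t 2) = (t 0 + t 1 + t 2)^2 := by
        apply mul_left_cancel₀ h3K; linear_combination e0
      have q1 : (9 : AlgebraicClosure (ZMod p)) * (t 0 * t 2) = (t 0 + t 1 + t 2)^2 := by
        apply mul_left_cancel₀ h3K; linear_combination e1
      have q2 : (9 : AlgebraicClosure (ZMod p)) * (t 0 * t 1) = (t 0 + t 1 + t 2)^2 := by
        apply mul_left_cancel₀ h3K; linear_combination e2
      by_cases hs : t 0 + t 1 + t 2 = 0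
      · exfalso
        have z0 : t 1 * t 2 = 0 := by
          apply mul_left_cancel₀ h9K; rw [mul_zero]; rw [q0, hs]; ring
        have z1 : t 0 * t 2 = 0 := by
          apply mul_left_cancel₀ h9K; rw [mul_zero]; rw [q1, hs]; ring
        have z2 : t 0 * t 1 = 0 := by
          apply mul_left_cancel₀ h9K; rw [mul_zero]; rw [q2, hs]; ring
        obtain ⟨i, hi⟩ := Function.ne_iff.mp ht
        simp only [Pi.zero_apply] at hi
        fin_cases i
        · have h1 : t 1 = 0 := by
            rcases mul_eq_zero.mp z2 with h | h; exact absurd h hi; exact h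
          have h2 : t 2 = 0 := by
            rcases mul_eq_zero.mp z1 with h | h; exact absurd h hi; exact h
          apply hi; have := hs; rw [h1, h2] at this; simpa using this
        · have h1 : t 0 = 0 := by
            rcases mul_eq_zero.mp z2 with h | h; exact h; exact absurd h hi
          have h2 : t 2 = 0 := by
            rcases mul_eq_zero.mp z0 with h | h; exact absurd h hi; exact h
          apply hi; have := hs; rw [h1, h2] at this; simpa using this
        · have h1 : t 0 = 0 := by
            rcases mul_eq_zero.mp z1 with h | h; exact h; exact absurd h hi
          have h2 : t 1 = 0 := by
            rcases mul_eq_zero.mp z0 with h | h; exact h; exact absurd h hi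
          apply hi; have := hs; rw [h1, h2] at this; simpa using this
      · -- s ≠ 0 case: all coordinates equal
        have hs2 : (t 0 + t 1 + t 2)^2 ≠ 0 := pow_ne_zero _ hs
        have ht0 : t 0 ≠ 0 := by
          intro h; apply hs2; rw [← q1, h]; ring
        have ht1 : t 1 ≠ 0 := by
          intro h; apply hs2; rw [← q0, h]; ring
        have ht2 : t 2 ≠ 0 := by
          intro h; apply hs2; rw [← q0, h]; ring
        have h01 : t 0 = t 1 := by
          apply mul_left_cancel₀ (mul_ne_zero h9K ht2); linear_combination q1 - q0
        have h12 : t 1 = t 2 := by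
          apply mul_left_cancel₀ (mul_ne_zero h9K ht0); linear_combination q2 - q1
        refine ⟨t 0, funext fun i => ?_⟩
        fin_cases i
        · rfl
        · exact h01.symm
        · exact (h01.trans h12).symm
    · rintro ⟨c, rfl⟩
      refine ⟨by rw [he]; ring, ?_⟩
      intro k; fin_cases k
      · exact he0.trans (by ring)
      · exact he1.trans (by ring)
      · exact he2.trans (by ring)
  · -- Part 2
    have h27 : (C 27 : MvPolynomial (Fin 2) (ZMod p)) = 27 := map_ofNat _ _
    have h9 : (C 9 : MvPolynomial (Fin 2) (ZMod p)) = 9 := map_ofNat _ _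
    rw [h27, h9]; ring
  · -- Part 3
    have hp2 : 2 ≤ p := hp.two_le
    have h3Z : (3 : ZMod p) ≠ 0 := by
      intro h
      have : ((3 : ℕ) : ZMod p) = 0 := by exact_mod_cast h
      exact hp3' ((ZMod.natCast_eq_zero_iff 3 p).mp this)
    constructor
    · rintro ⟨a, b, a', b', heq, -⟩
      have E1 := congrArg (eval ![(1 : ZMod p), 0]) heq
      have E2 := congrArg (eval ![(0 : ZMod p), 1]) heq
      have E3 := congrArg (eval ![(1 : ZMod p), 1]) heq
      simp at E1 E2 E3
      -- E1 : 1 = a * a',  E2 : 1 = b * b',  E3 : 1 = (a + b) * (a' + b')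
      have h1 : a * a' = 1 := E1.symm
      have h2 : b * b' = 1 := E2.symm
      have h3 : a * b' + a' * b = -1 := by linear_combination E3.symm - h1 - h2
      set ζ := a' * b with hζdef
      have hζ : ζ ^ 2 + ζ + 1 = 0 := by
        rw [hζdef]; linear_combination (a' * b) * h3 - (b * b') * h1 - h2
      have hζ3 : ζ ^ 3 = 1 := by linear_combination (ζ - 1) * hζ
      have hζ0 : ζ ≠ 0 := by
        intro h; rw [h] at hζ3; simp at hζ3
      have hζ1 : ζ ≠ 1 := by
        intro h; rw [h] at hζ; apply h3Z; linear_combination hζ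
      set u : (ZMod p)ˣ := Units.mk0 ζ hζ0 with hu
      have hu3 : u ^ 3 = 1 := by
        ext; push_cast [hu]; exact hζ3
      have hdvd : orderOf u ∣ 3 := orderOf_dvd_of_pow_eq_one hu3
      have hne1 : orderOf u ≠ 1 := by
        intro h
        have := orderOf_eq_one_iff.mp h
        apply hζ1
        have : (u : ZMod p) = 1 := by rw [this]; rfl
        simpa [hu] using this
      have hord : orderOf u = 3 := by
        rcases (Nat.prime_three).eq_one_or_self_of_dvd _ hdvd with h | h
        · exact absurd h hne1
        · exact h
      have hcard : orderOf u ∣ Fintype.card (ZMod p)ˣ := orderOf_dvd_card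
      rw [hord, ZMod.card_units_eq_totient, Nat.totient_prime hp] at hcard
      obtain ⟨k, hk⟩ := hcard
      omega
    · intro hmod
      haveI : Fact (Nat.Prime 3) := ⟨Nat.prime_three⟩
      have hdvd : 3 ∣ Fintype.card (ZMod p)ˣ := by
        rw [ZMod.card_units_eq_totient, Nat.totient_prime hp]
        omega
      have hex : ∃ ζ : ZMod p, ζ ^ 3 = 1 ∧ ζ ≠ 1 ∧ ζ ≠ 0 := by
        obtain ⟨u, hu⟩ := exists_prime_orderOf_dvd_card 3 hdvd
        have hu3 : u ^ 3 = 1 := by rw [← hu]; exact pow_orderOf_eq_one u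
        refine ⟨(u : ZMod p), ?_, ?_, u.ne_zero⟩
        · rw [← Units.val_pow_eq_pow_val, hu3, Units.val_one]
        · intro h
          have h1 : u = 1 := Units.ext (h.trans Units.val_one.symm)
          rw [h1, orderOf_one] at hu
          exact absurd hu (by norm_num)
      obtain ⟨ζ, hζ3, hζ1, hζ0⟩ := hex
      have hζq : ζ ^ 2 + ζ + 1 = 0 := by
        have hfac : (ζ - 1) * (ζ ^ 2 + ζ + 1) = 0 := by linear_combination hζ3
        rcases mul_eq_zero.mp hfac with h | h
        · exact absurd (by linear_combination h) hζ1
        · exact h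
      refine ⟨1, ζ, 1, ζ ^ 2, ?_, ?_⟩
      · have hs : ζ + ζ ^ 2 = -1 := by linear_combination hζq
        have hm : ζ * ζ ^ 2 = 1 := by linear_combination hζ3
        have e1 : (C ζ + C (ζ ^ 2) : MvPolynomial (Fin 2) (ZMod p)) = -1 := by
          rw [← C_add, hs]; simp
        have e2 : (C ζ * C (ζ ^ 2) : MvPolynomial (Fin 2) (ZMod p)) = 1 := by
          rw [← C_mul, hm]; simp
        rw [C_1]
        linear_combination (-(X 0 * X 1)) * e1 - (X 1 ^ 2) * e2
      · intro γ h
        rw [Prod.mk.injEq] at h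
        obtain ⟨hγ1, hγ2⟩ := h
        rw [mul_one] at hγ1
        rw [← hγ1] at hγ2
        -- hγ2 : ζ ^ 2 = 1 * ζ
        have : ζ * (ζ - 1) = 0 := by linear_combination hγ2
        rcases mul_eq_zero.mp this with h' | h'
        · exact hζ0 h'
        · exact hζ1 (by linear_combination h')
end

section
/- Let p ≠ 3 be a prime number, e ≥ 1 an integer, and q = p^e. Then for every (t0, t1, t2) ∈ F_q³ ∖ {0} with 27·t0t1t2 = (t0 + t1 + t2)³, the following hold: (1) at least one of the products t0t1, t1t2, t2t0 is nonzero, i.e. at least one of the expressions t1/t0, t2/t1, t0/t2 is properly defined and nonzero in F_q; (2) whenever t0 ≠ 0 and t1 ≠ 0, the quotient t1/t0 is a cube in F_q^*, and likewise t2/t1 is a cube whenever t1, t2 ≠ 0, and t0/t2 is a cube whenever t2, t0 ≠ 0. -/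
/-- Key algebraic lemma: if `27uv = (1+u+v)³` in a field where `3 ≠ 0` and `u ≠ 0`,
then `u` is a nonzero cube.  (The explicit cube root is `(1+v-2u)/(u+v-2)`, coming
from the rational parametrization of the nodal cubic.) -/
lemma nodal_key {F : Type*} [Field F] (h3 : (3 : F) ≠ 0)
    (u v : F) (hu : u ≠ 0) (h : 27 * (u * v) = (1 + u + v) ^ 3) :
    ∃ s : F, s ≠ 0 ∧ u = s ^ 3 := by
  by_cases hd : u + v - 2 = 0
  · -- then `1+u+v = 3`, so `uv = 1`, hence `(u-1)² = 0` and `u = 1`.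
    have hsum : u + v = 2 := by linear_combination hd
    have h27 : (27 : F) ≠ 0 := by
      have h27' : (27 : F) = 3 ^ 3 := by norm_num
      rw [h27']; exact pow_ne_zero _ h3
    have huv : u * v = 1 := by
      have h13 : 1 + u + v = 3 := by linear_combination hd
      have h2 : 27 * (u * v) = 27 := by rw [h, h13]; norm_num
      have := mul_left_cancel₀ h27 (h2.trans (by norm_num : (27:F) = 27 * 1))
      exact this
    have hu1 : (u - 1) ^ 2 = 0 := by linear_combination u * hsum - huv
    have hu1' : u - 1 = 0 := pow_eq_zero_iff (n := 2) (by norm_num) |>.mp hu1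
    exact ⟨1, one_ne_zero, by rw [sub_eq_zero.mp hu1']; norm_num⟩
  · have hs3 : ((1 + v - 2 * u) / (u + v - 2)) ^ 3 = u := by
      rw [div_pow, div_eq_iff (pow_ne_zero 3 hd)]
      linear_combination (u - 1) * h
    refine ⟨(1 + v - 2 * u) / (u + v - 2), fun hs => hu ?_, hs3.symm⟩
    rw [← hs3, hs]
    ring

/-- **Lemma (points of `27T0T1T2 = (T0+T1+T2)³` over `F_q`).**  Let `p ≠ 3` be a prime,
`e ≥ 1`, and `F` the field with `q = p^e` elements.  For every nonzero `(t0,t1,t2) ∈ F³`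
with `27·t0t1t2 = (t0+t1+t2)³`: (1) at least one of `t0t1`, `t1t2`, `t2t0` is nonzero;
(2) each of the quotients `t1/t0`, `t2/t1`, `t0/t2` is a cube in `F^*` whenever it is
properly defined. -/
theorem nodal_cubic_quotients_are_cubes
    {F : Type*} [Field F] [Fintype F]
    (p e : ℕ) (hp : Nat.Prime p) (hp3 : p ≠ 3) (he : 1 ≤ e) [CharP F p]
    (hcard : Fintype.card F = p ^ e)
    (t : Fin 3 → F) (ht : t ≠ 0)
    (hC : 27 * (t 0 * t 1 * t 2) = (t 0 + t 1 + t 2) ^ 3) :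
    (t 0 * t 1 ≠ 0 ∨ t 1 * t 2 ≠ 0 ∨ t 2 * t 0 ≠ 0) ∧
    (t 0 ≠ 0 → t 1 ≠ 0 → ∃ s : F, s ≠ 0 ∧ t 1 / t 0 = s ^ 3) ∧
    (t 1 ≠ 0 → t 2 ≠ 0 → ∃ s : F, s ≠ 0 ∧ t 2 / t 1 = s ^ 3) ∧
    (t 2 ≠ 0 → t 0 ≠ 0 → ∃ s : F, s ≠ 0 ∧ t 0 / t 2 = s ^ 3) := by
  have h3 : (3 : F) ≠ 0 := by
    intro h
    have hdvd : p ∣ 3 := (CharP.cast_eq_zero_iff F p 3).mp (by exact_mod_cast h)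
    exact hp3 ((Nat.prime_dvd_prime_iff_eq hp (by norm_num)).mp hdvd)
  have key : ∀ a b c : F, a ≠ 0 → b ≠ 0 → 27 * (a * b * c) = (a + b + c) ^ 3 →
      ∃ s : F, s ≠ 0 ∧ b / a = s ^ 3 := by
    intro a b c ha hb h
    have harg : 27 * (b / a * (c / a)) = (1 + b / a + c / a) ^ 3 := by
      have e1 : (1 + b / a + c / a) = (a + b + c) / a := by field_simp
      rw [e1, div_pow, ← h]
      field_simp
    exact nodal_key h3 (b / a) (c / a) (div_ne_zero hb ha) harg
  refine ⟨?_, fun h0 h1 => key _ _ (t 2) h0 h1 hC,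
      fun h1 h2 => key _ _ (t 0) h1 h2 (by linear_combination hC),
      fun h2 h0 => key _ _ (t 1) h2 h0 (by linear_combination hC)⟩
  by_cases h0 : t 0 = 0
  · have hsum : t 0 + t 1 + t 2 = 0 :=
      pow_eq_zero_iff (n := 3) (by norm_num) |>.mp (by rw [← hC, h0]; ring)
    have ht1 : t 1 = - t 2 := by linear_combination hsum - h0
    have ht2 : t 2 ≠ 0 := by
      intro h2
      apply ht
      funext i
      fin_cases i <;> simp_all
    exact Or.inr (Or.inl (by rw [ht1]; exact mul_ne_zero (neg_ne_zero.mpr ht2) ht2))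
  · by_cases h1 : t 1 = 0
    · have hsum : t 0 + t 1 + t 2 = 0 :=
        pow_eq_zero_iff (n := 3) (by norm_num) |>.mp (by rw [← hC, h1]; ring)
      have ht2 : t 2 = - t 0 := by linear_combination hsum - h1
      exact Or.inr (Or.inr (by rw [ht2]; exact mul_ne_zero (neg_ne_zero.mpr h0) h0))
    · exact Or.inl (mul_ne_zero h0 h1)
end

section
/- Let 𝔩 be a nonzero prime of O_K that is ramified in L/K, with 𝔩O_L = 𝔓³, and suppose ℓ := #(O_K/𝔩) is not a power of 3. Let α ∈ (O_K/𝔩)^* and assume a, b, c, d ∈ L satisfy ν_𝔓(a), ν_𝔓(b), ν_𝔓(c) ≥ 0 with residues a ≡ α/3, b ≡ 1/3, c ≡ 1/(3α) (mod 𝔓) in O_L/𝔓 ≅ O_K/𝔩, and ν_𝔓(d) ∈ {1, 2}. Then the cubic surface S defined by T0T1T2 = N_{L/K}(aT0 + bT1 + cT2 + dT3) has a K_𝔩-rational point. -/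
open NumberField IsDedekindDomain MvPolynomial
open scoped Multiplicative

open Filter

local notation "ℤₘ₀" => WithZero (Multiplicative ℤ)

set_option linter.unusedSectionVars false
set_option maxHeartbeats 1000000
set_option synthInstance.maxHeartbeats 400000

section Helpers

theorem zm0_exists_nat {ε : ℤₘ₀} (h0 : ε ≠ 0) (h1 : ε < 1) :
    ∃ k : ℕ, 1 ≤ k ∧ ε = ((Multiplicative.ofAdd (-(k : ℤ)) : Multiplicative ℤ) : ℤₘ₀) := by
  set g := WithZero.unzero h0 with hg
  have hcoe : ε = (g : ℤₘ₀) := (WithZero.coe_unzero h0).symm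
  have hlt : g < 1 := by
    rw [hcoe, ← WithZero.coe_one, WithZero.coe_lt_coe] at h1; exact h1
  have hta : Multiplicative.toAdd g < 0 := hlt
  refine ⟨(-(Multiplicative.toAdd g)).toNat, by omega, ?_⟩
  rw [hcoe]
  congr 1
  rw [Int.toNat_of_nonneg (by omega), neg_neg, ofAdd_toAdd]

theorem cubic_hensel {F : Type*} [Field F] [Valued F ℤₘ₀] [CompleteSpace F]
    {c0 c1 c2 c3 : F} (h0 : Valued.v c0 < 1) (h1 : Valued.v c1 = 1)
    (h2 : Valued.v c2 ≤ 1) (h3 : Valued.v c3 ≤ 1) :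
    ∃ x : F, c0 + c1 * x + c2 * x ^ 2 + c3 * x ^ 3 = 0 := by
  by_cases hc0 : c0 = 0
  · exact ⟨0, by rw [hc0]; ring⟩
  set V : Valuation F ℤₘ₀ := Valued.v with hV
  set ε : ℤₘ₀ := V c0 with hε
  have hε0 : ε ≠ 0 := by simpa [hε] using hc0
  have hε1 : ε < 1 := h0
  have hεle : ε ≤ 1 := le_of_lt hε1
  have hpowmono : ∀ {i j : ℕ}, i ≤ j → ε ^ j ≤ ε ^ i := by
    intro i j hij
    obtain ⟨c, rfl⟩ := Nat.exists_eq_add_of_le hij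
    rw [pow_add]
    exact mul_le_of_le_one_right' (pow_le_one' hεle c)
  set g : F → F := fun x => c0 + c1 * x + c2 * x ^ 2 + c3 * x ^ 3 with hgdef
  set g' : F → F := fun x => c1 + 2 * c2 * x + 3 * c3 * x ^ 2 with hg'def
  have hv2 : V (2 : F) ≤ 1 := by
    have : (2 : F) = 1 + 1 := by norm_num
    rw [this]
    exact le_trans (Valuation.map_add _ _ _) (by simp)
  have hv3 : V (3 : F) ≤ 1 := by
    have : (3 : F) = 1 + 1 + 1 := by norm_num
    rw [this]
    refine le_trans (Valuation.map_add _ _ _) (max_le (le_trans (Valuation.map_add _ _ _) (by simp)) (by simp))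
  have hg'unit : ∀ x : F, V x < 1 → V (g' x) = 1 := by
    intro x hx
    have hxle : V x ≤ 1 := le_of_lt hx
    have ht : V (2 * c2 * x + 3 * c3 * x ^ 2) < 1 := by
      refine lt_of_le_of_lt (Valuation.map_add _ _ _) (max_lt ?_ ?_)
      · rw [map_mul, map_mul]
        calc V 2 * V c2 * V x ≤ 1 * 1 * V x := by
              exact mul_le_mul' (mul_le_mul' hv2 h2) le_rfl
          _ = V x := by rw [one_mul, one_mul]
          _ < 1 := hx
      · rw [map_mul, map_mul, map_pow]
        calc V 3 * V c3 * V x ^ 2 ≤ 1 * 1 * V x ^ 2 :=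
              mul_le_mul' (mul_le_mul' hv3 h3) le_rfl
          _ = V x * V x := by rw [one_mul, one_mul, pow_two]
          _ ≤ V x * 1 := mul_le_mul' le_rfl hxle
          _ = V x := mul_one _
          _ < 1 := hx
    have : g' x = c1 + (2 * c2 * x + 3 * c3 * x ^ 2) := by rw [hg'def]; ring
    rw [this, Valuation.map_add_eq_of_lt_left _ (by rw [h1]; exact ht), h1]
  have key : ∀ x h : F, g (x + h) = g x + g' x * h + (c2 + 3 * c3 * x + c3 * h) * h ^ 2 := by
    intro x h
    simp only [hgdef, hg'def]
    ring
  set step : F → F := fun x => x - g x / g' x with hstepdef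
  set seq : ℕ → F := fun n => Nat.rec 0 (fun _ y => step y) n with hseqdef
  have hseq0 : seq 0 = 0 := rfl
  have hseqS : ∀ n, seq (n + 1) = step (seq n) := fun n => rfl
  have main : ∀ n, V (seq n) ≤ ε ∧ V (g (seq n)) ≤ ε ^ (n + 1) := by
    intro n
    induction n with
    | zero =>
      constructor
      · rw [hseq0, Valuation.map_zero]; exact zero_le'
      · have : g 0 = c0 := by rw [hgdef]; ring
        rw [hseq0, this, pow_one]
    | succ n ih =>
      obtain ⟨hx, hgx⟩ := ih
      set x := seq n
      have hx1 : V x < 1 := lt_of_le_of_lt hx hε1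
      have hg'x := hg'unit x hx1
      have hg'ne : g' x ≠ 0 := by
        intro h; rw [h, Valuation.map_zero] at hg'x; exact zero_ne_one hg'x
      have hstep' : seq (n + 1) = x + -(g x / g' x) := by
        rw [hseqS, hstepdef]; ring
      set h := -(g x / g' x) with hh
      have hVh : V h = V (g x) := by
        rw [hh, Valuation.map_neg, map_div₀, hg'x, div_one]
      have hVh1 : V h ≤ ε ^ (n + 1) := by rw [hVh]; exact hgx
      have hVhε : V h ≤ ε := le_trans hVh1
        (le_trans (hpowmono (show 1 ≤ n + 1 by omega)) (le_of_eq (pow_one ε)))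
      have hVhlt : V h < 1 := lt_of_le_of_lt hVhε hε1
      constructor
      · rw [hstep']
        exact le_trans (Valuation.map_add _ _ _) (max_le hx hVhε)
      · have hcancel : g x + g' x * h = 0 := by
          rw [hh, mul_neg, mul_div_cancel₀ _ hg'ne]; ring
        have hgxh : g (x + h) = (c2 + 3 * c3 * x + c3 * h) * h ^ 2 := by
          rw [key x h, hcancel]; ring
        have hR : V (c2 + 3 * c3 * x + c3 * h) ≤ 1 := by
          refine le_trans (Valuation.map_add _ _ _) (max_le (le_trans (Valuation.map_add _ _ _) (max_le h2 ?_)) ?_)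
          · rw [map_mul, map_mul]
            calc V 3 * V c3 * V x ≤ 1 * 1 * 1 :=
                mul_le_mul' (mul_le_mul' hv3 h3) (le_of_lt hx1)
              _ = 1 := by norm_num
          · rw [map_mul]
            calc V c3 * V h ≤ 1 * 1 := mul_le_mul' h3 (le_of_lt hVhlt)
              _ = 1 := by norm_num
        rw [hstep', hgxh, map_mul, map_pow]
        calc V (c2 + 3 * c3 * x + c3 * h) * V h ^ 2 ≤ 1 * (ε ^ (n + 1)) ^ 2 := by
              refine mul_le_mul' hR ?_
              exact pow_le_pow_left' hVh1 2
          _ = ε ^ (2 * n + 2) := by rw [one_mul, ← pow_mul]; ring_nf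
          _ ≤ ε ^ (n + 1 + 1) := hpowmono (by omega)
  have hdiff : ∀ n k : ℕ, V (seq (n + k) - seq n) ≤ ε ^ (n + 1) := by
    intro n k
    induction k with
    | zero => simp
    | succ k ih =>
      have hsplit : seq (n + (k + 1)) - seq n
          = (seq (n + k + 1) - seq (n + k)) + (seq (n + k) - seq n) := by
        rw [show n + (k + 1) = n + k + 1 by ring]; ring
      rw [hsplit]
      refine le_trans (Valuation.map_add _ _ _) (max_le ?_ ih)
      have h1' : seq (n + k + 1) - seq (n + k) = -(g (seq (n + k)) / g' (seq (n + k))) := by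
        rw [hseqS, hstepdef]; ring
      have hm := main (n + k)
      have hx1 : V (seq (n + k)) < 1 := lt_of_le_of_lt hm.1 hε1
      have hg'x := hg'unit _ hx1
      rw [h1', Valuation.map_neg, map_div₀, hg'x, div_one]
      exact le_trans hm.2 (hpowmono (by omega : n + 1 ≤ n + k + 1))
  -- find N for any γ
  obtain ⟨k, hk1, hkeq⟩ := zm0_exists_nat hε0 hε1
  have hsmall : ∀ γ : ℤₘ₀ˣ, ∃ N : ℕ, ∀ n, N ≤ n → ε ^ (n + 1) < (γ : ℤₘ₀) := by
    intro γ
    have hγ0 : (γ : ℤₘ₀) ≠ 0 := γ.ne_zero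
    set t := Multiplicative.toAdd (WithZero.unzero hγ0) with ht
    refine ⟨t.natAbs + 1, fun n hn => ?_⟩
    have hγeq : (γ : ℤₘ₀) = ((Multiplicative.ofAdd t : Multiplicative ℤ) : ℤₘ₀) := by
      rw [ht, ofAdd_toAdd, WithZero.coe_unzero]
    rw [hγeq, hkeq, ← WithZero.coe_pow, WithZero.coe_lt_coe, ← ofAdd_nsmul]
    rw [Multiplicative.ofAdd_lt]
    have : (n + 1) • (-(k : ℤ)) = -((n + 1 : ℕ) * k : ℤ) := by push_cast; ring
    rw [this]
    have h1 : (t.natAbs : ℤ) + 1 ≤ (n : ℤ) := by exact_mod_cast hn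
    have hk1' : (1 : ℤ) ≤ (k : ℤ) := by exact_mod_cast hk1
    have hnk : ((n : ℤ) + 1) ≤ ((n : ℤ) + 1) * (k : ℤ) :=
      le_mul_of_one_le_right (by positivity) hk1'
    have habs : -(t.natAbs : ℤ) ≤ t := neg_abs_le t |>.trans_eq' (by rw [Int.abs_eq_natAbs])
    push_cast
    nlinarith
  have hcauchy : CauchySeq seq := by
    rw [(Valued.hasBasis_uniformity F ℤₘ₀).cauchySeq_iff]
    intro γ _
    have hγe : MonoidWithZeroHom.ValueGroup₀.embedding γ.1 ≠ 0 := (map_ne_zero _).mpr γ.ne_zero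
    obtain ⟨N, hN⟩ := hsmall (Units.mk0 _ hγe)
    refine ⟨N, fun m hm n hn => ?_⟩
    simp only [Set.mem_setOf_eq]
    rw [Valuation.restrict_lt_iff_lt_embedding]
    rcases le_total m n with hmn | hmn
    · obtain ⟨k', rfl⟩ := Nat.exists_eq_add_of_le hmn
      exact lt_of_le_of_lt (hdiff m k') (hN m hm)
    · obtain ⟨k', rfl⟩ := Nat.exists_eq_add_of_le hmn
      rw [Valuation.map_sub_swap]
      exact lt_of_le_of_lt (hdiff n k') (hN n hn)
  obtain ⟨y, hy⟩ := cauchySeq_tendsto_of_complete hcauchy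
  have gcont : Continuous g := by
    rw [hgdef]
    exact ((continuous_const.add (continuous_const.mul continuous_id)).add
      (continuous_const.mul (continuous_pow 2))).add
      (continuous_const.mul (continuous_pow 3))
  have hgy : Tendsto (fun n => g (seq n)) atTop (nhds (g y)) :=
    (gcont.tendsto y).comp hy
  have hgy0 : Tendsto (fun n => g (seq n)) atTop (nhds 0) := by
    rw [(Valued.hasBasis_nhds_zero F ℤₘ₀).tendsto_right_iff]
    intro γ _
    have hγe : MonoidWithZeroHom.ValueGroup₀.embedding γ.1 ≠ 0 := (map_ne_zero _).mpr γ.ne_zero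
    obtain ⟨N, hN⟩ := hsmall (Units.mk0 _ hγe)
    refine eventually_atTop.mpr ⟨N, fun n hn => ?_⟩
    rw [Set.mem_setOf_eq, Valuation.restrict_lt_iff_lt_embedding]
    exact lt_of_le_of_lt (main n).2 (hN n hn)
  have : g y = 0 := tendsto_nhds_unique hgy hgy0
  exact ⟨y, by rw [← this]⟩


theorem coeff_prod_linear {L : Type*} [Field L] (vL : Valuation L ℤₘ₀) {ι : Type*}
    [DecidableEq ι] (s : Finset ι) (A E : ι → L)
    (hA : ∀ i, vL (A i) ≤ 1) (hE : ∀ i, vL (E i) < 1) :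
    ∀ j, vL ((∏ i ∈ s, (Polynomial.C (A i) * Polynomial.X + Polynomial.C (E i))).coeff j) ≤ 1 ∧
    (j < s.card → vL ((∏ i ∈ s, (Polynomial.C (A i) * Polynomial.X + Polynomial.C (E i))).coeff j) < 1) := by
  induction s using Finset.cons_induction with
  | empty =>
    intro j
    rw [Finset.prod_empty]
    constructor
    · rcases Nat.eq_zero_or_pos j with h | h
      · subst h; rw [Polynomial.coeff_one_zero, vL.map_one]
      · rw [Polynomial.coeff_one, if_neg (by omega), vL.map_zero]; exact zero_le'
    · intro hj; simp at hj
  | cons i s his ih =>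
    intro j
    rw [Finset.prod_cons]
    set g := ∏ i ∈ s, (Polynomial.C (A i) * Polynomial.X + Polynomial.C (E i)) with hg
    have hco : ∀ j : ℕ, ((Polynomial.C (A i) * Polynomial.X + Polynomial.C (E i)) * g).coeff j
        = A i * (Polynomial.X * g).coeff j + E i * g.coeff j := by
      intro j
      rw [show (Polynomial.C (A i) * Polynomial.X + Polynomial.C (E i)) * g
          = Polynomial.C (A i) * (Polynomial.X * g) + Polynomial.C (E i) * g by ring,
        Polynomial.coeff_add, Polynomial.coeff_C_mul, Polynomial.coeff_C_mul]
    have hXg : ∀ j : ℕ, vL ((Polynomial.X * g).coeff j) ≤ 1 ∧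
        (j < s.card + 1 → vL ((Polynomial.X * g).coeff j) < 1) := by
      intro j
      cases j with
      | zero =>
        rw [Polynomial.mul_coeff_zero, Polynomial.coeff_X_zero, zero_mul, vL.map_zero]
        exact ⟨zero_le', fun _ => zero_lt_one⟩
      | succ n =>
        rw [Polynomial.coeff_X_mul]
        exact ⟨(ih n).1, fun hn => (ih n).2 (by omega)⟩
    constructor
    · rw [hco]
      refine le_trans (vL.map_add _ _) (max_le ?_ ?_)
      · rw [vL.map_mul]
        calc vL (A i) * vL ((Polynomial.X * g).coeff j) ≤ 1 * 1 :=
            mul_le_mul' (hA i) (hXg j).1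
          _ = 1 := one_mul 1
      · rw [vL.map_mul]
        calc vL (E i) * vL (g.coeff j) ≤ 1 * 1 :=
            mul_le_mul' (le_of_lt (hE i)) (ih j).1
          _ = 1 := one_mul 1
    · intro hj
      rw [Finset.card_cons] at hj
      rw [hco]
      refine lt_of_le_of_lt (vL.map_add _ _) (max_lt ?_ ?_)
      · rw [vL.map_mul]
        calc vL (A i) * vL ((Polynomial.X * g).coeff j) ≤ 1 * vL ((Polynomial.X * g).coeff j) :=
            mul_le_mul' (hA i) le_rfl
          _ = vL ((Polynomial.X * g).coeff j) := one_mul _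
          _ < 1 := (hXg j).2 (by omega)
      · rw [vL.map_mul]
        calc vL (E i) * vL (g.coeff j) ≤ vL (E i) * 1 := mul_le_mul' le_rfl (ih j).1
          _ = vL (E i) := mul_one _
          _ < 1 := hE i


variable {R : Type*} [CommRing R] [IsDedekindDomain R]

theorem intval_exists_nat (u : HeightOneSpectrum R) {r : R} (hr : r ≠ 0) :
    ∃ m : ℕ, u.intValuation r = Multiplicative.ofAdd (-(m : ℤ)) := by
  have h0 : u.intValuation r ≠ 0 := by
    rw [u.intValuation_apply]
    exact u.intValuation_ne_zero r hr
  have h1 : u.intValuation r ≤ 1 := by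
    rw [u.intValuation_apply]; exact u.intValuation_le_one r
  set g := WithZero.unzero h0 with hg
  have hcoe : u.intValuation r = (g : ℤₘ₀) := (WithZero.coe_unzero h0).symm
  have hgle : g ≤ 1 := by
    rw [hcoe, ← WithZero.coe_one, WithZero.coe_le_coe] at h1; exact h1
  have hta : Multiplicative.toAdd g ≤ 0 := hgle
  refine ⟨(-(Multiplicative.toAdd g)).toNat, ?_⟩
  rw [hcoe]
  congr 1
  rw [Int.toNat_of_nonneg (by omega), neg_neg, ofAdd_toAdd]

theorem intval_le_pow_iff (u : HeightOneSpectrum R) (r : R) (n : ℕ) :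
    u.intValuation r ≤ Multiplicative.ofAdd (-(n : ℤ)) ↔ u.asIdeal ^ n ∣ Ideal.span {r} := by
  rw [u.intValuation_apply]; exact u.intValuation_le_pow_iff_dvd r n

theorem intval_eq_of_dvd_not_dvd (u : HeightOneSpectrum R) {r : R} (hr : r ≠ 0) {n : ℕ}
    (h1 : u.asIdeal ^ n ∣ Ideal.span {r}) (h2 : ¬ u.asIdeal ^ (n + 1) ∣ Ideal.span {r}) :
    u.intValuation r = Multiplicative.ofAdd (-(n : ℤ)) := by
  obtain ⟨m, hm⟩ := intval_exists_nat u hr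
  have hle : u.intValuation r ≤ Multiplicative.ofAdd (-(n : ℤ)) := (intval_le_pow_iff u r n).mpr h1
  have hnle : ¬ u.intValuation r ≤ Multiplicative.ofAdd (-((n + 1 : ℕ) : ℤ)) := by
    intro h; exact h2 ((intval_le_pow_iff u r (n + 1)).mp h)
  rw [hm] at hle hnle ⊢
  rw [WithZero.coe_le_coe, Multiplicative.ofAdd_le] at hle hnle
  push_neg at hnle
  have : (m : ℤ) = n := by push_cast at hnle ⊢; omega
  rw [this]


end Helpers

section NF
variable {K : Type*} [Field K] [NumberField K]
    {L : Type*} [Field L] [NumberField L] [Algebra K L] [FiniteDimensional K L]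
    (v : HeightOneSpectrum (𝓞 K)) (w : HeightOneSpectrum (𝓞 L))

variable {K : Type*} [Field K] [NumberField K]
    {L : Type*} [Field L] [NumberField L] [Algebra K L]
    (v : HeightOneSpectrum (𝓞 K)) (w : HeightOneSpectrum (𝓞 L))

theorem comap_w (hw : Ideal.map (algebraMap (𝓞 K) (𝓞 L)) v.asIdeal = w.asIdeal ^ 3) :
    Ideal.comap (algebraMap (𝓞 K) (𝓞 L)) w.asIdeal = v.asIdeal := by
  have h1 : v.asIdeal ≤ Ideal.comap (algebraMap (𝓞 K) (𝓞 L)) w.asIdeal := by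
    rw [← Ideal.map_le_iff_le_comap, hw]
    exact Ideal.pow_le_self (by norm_num)
  have hp : (Ideal.comap (algebraMap (𝓞 K) (𝓞 L)) w.asIdeal).IsPrime :=
    Ideal.IsPrime.comap _ (hK := w.isPrime)
  have hmax : v.asIdeal.IsMaximal := Ideal.IsPrime.isMaximal v.isPrime v.ne_bot
  exact (hmax.eq_of_le hp.ne_top h1).symm

theorem ringOfIntegers_algebraMap_injective :
    Function.Injective (algebraMap (𝓞 K) (𝓞 L)) := by
  have h : Function.Injective (algebraMap (𝓞 K) L) := by
    rw [IsScalarTower.algebraMap_eq (𝓞 K) K L]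
    exact (algebraMap K L).injective.comp (IsFractionRing.injective (𝓞 K) K)
  intro x y hxy
  apply h
  rw [IsScalarTower.algebraMap_eq (𝓞 K) (𝓞 L) L, RingHom.comp_apply, RingHom.comp_apply, hxy]

theorem intval_map_pow (hw : Ideal.map (algebraMap (𝓞 K) (𝓞 L)) v.asIdeal = w.asIdeal ^ 3)
    (r : 𝓞 K) :
    w.intValuation (algebraMap (𝓞 K) (𝓞 L) r) = (v.intValuation r) ^ 3 := by
  by_cases hr : r = 0
  · subst hr; rw [map_zero, map_zero, map_zero]; simp
  obtain ⟨m, hm⟩ := intval_exists_nat v hr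
  have hdvd1 : v.asIdeal ^ m ∣ Ideal.span {r} := (intval_le_pow_iff v r m).mp (le_of_eq hm)
  have hndvd1 : ¬ v.asIdeal ^ (m + 1) ∣ Ideal.span {r} := by
    intro h
    have h2 := (intval_le_pow_iff v r (m + 1)).mpr h
    rw [hm, WithZero.coe_le_coe, Multiplicative.ofAdd_le] at h2
    push_cast at h2; omega
  obtain ⟨J, hJ⟩ := hdvd1
  have hJnd : ¬ v.asIdeal ∣ J := by
    rintro ⟨Q, hQ⟩
    exact hndvd1 ⟨Q, by rw [hJ, hQ]; ring⟩
  have hmap : Ideal.span {algebraMap (𝓞 K) (𝓞 L) r}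
      = Ideal.map (algebraMap (𝓞 K) (𝓞 L)) (Ideal.span {r}) := by
    rw [Ideal.map_span, Set.image_singleton]
  have hfac : Ideal.span {algebraMap (𝓞 K) (𝓞 L) r}
      = w.asIdeal ^ (3 * m) * Ideal.map (algebraMap (𝓞 K) (𝓞 L)) J := by
    rw [hmap, hJ, Ideal.map_mul, Ideal.map_pow, hw, ← pow_mul, mul_comm 3 m, mul_comm m 3]
  have hwJ : ¬ w.asIdeal ∣ Ideal.map (algebraMap (𝓞 K) (𝓞 L)) J := by
    intro h
    have hle := Ideal.le_of_dvd h
    rw [Ideal.map_le_iff_le_comap, comap_w v w hw] at hle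
    exact hJnd (Ideal.dvd_iff_le.mpr hle)
  have hdvd2 : w.asIdeal ^ (3 * m) ∣ Ideal.span {algebraMap (𝓞 K) (𝓞 L) r} := ⟨_, hfac⟩
  have hndvd2 : ¬ w.asIdeal ^ (3 * m + 1) ∣ Ideal.span {algebraMap (𝓞 K) (𝓞 L) r} := by
    rintro ⟨Q, hQ⟩
    apply hwJ
    refine ⟨Q, ?_⟩
    have hc : w.asIdeal ^ (3 * m) * Ideal.map (algebraMap (𝓞 K) (𝓞 L)) J
        = w.asIdeal ^ (3 * m) * (w.asIdeal * Q) := by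
      rw [← hfac, hQ]; ring
    have hnz : w.asIdeal ^ (3 * m) ≠ 0 :=
      pow_ne_zero _ (by rw [Ne, Ideal.zero_eq_bot]; exact w.ne_bot)
    exact mul_left_cancel₀ hnz hc
  have hr2 : algebraMap (𝓞 K) (𝓞 L) r ≠ 0 := fun h =>
    hr (ringOfIntegers_algebraMap_injective (K := K) (L := L) (by rw [h, map_zero]))
  rw [intval_eq_of_dvd_not_dvd w hr2 hdvd2 hndvd2, hm]
  rw [← WithZero.coe_pow]
  congr 1
  rw [← ofAdd_nsmul]
  congr 1
  push_cast
  ring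

theorem val_map_pow (hw : Ideal.map (algebraMap (𝓞 K) (𝓞 L)) v.asIdeal = w.asIdeal ^ 3)
    (z : K) : w.valuation L (algebraMap K L z) = (v.valuation K z) ^ 3 := by
  obtain ⟨x, y, hy, rfl⟩ := IsFractionRing.div_surjective (A := 𝓞 K) z
  have hcomm : ∀ t : 𝓞 K, algebraMap K L (algebraMap (𝓞 K) K t)
      = algebraMap (𝓞 L) L (algebraMap (𝓞 K) (𝓞 L) t) := by
    intro t
    rw [← IsScalarTower.algebraMap_apply, ← IsScalarTower.algebraMap_apply]
  rw [map_div₀, map_div₀, hcomm, hcomm, map_div₀,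
    w.valuation_of_algebraMap, w.valuation_of_algebraMap,
    v.valuation_of_algebraMap, v.valuation_of_algebraMap,
    intval_map_pow v w hw, intval_map_pow v w hw, div_pow]


theorem galois_fixes_w (hw : Ideal.map (algebraMap (𝓞 K) (𝓞 L)) v.asIdeal = w.asIdeal ^ 3)
    (σ : L ≃ₐ[K] L) :
    Ideal.map ((galRestrict (𝓞 K) K L (𝓞 L) σ : 𝓞 L ≃ₐ[𝓞 K] 𝓞 L) :
      𝓞 L →+* 𝓞 L) w.asIdeal = w.asIdeal := by
  set f := ((galRestrict (𝓞 K) K L (𝓞 L) σ : 𝓞 L ≃ₐ[𝓞 K] 𝓞 L) : 𝓞 L →+* 𝓞 L) with hf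
  have hcomp : f.comp (algebraMap (𝓞 K) (𝓞 L)) = algebraMap (𝓞 K) (𝓞 L) := by
    ext x
    simp only [RingHom.comp_apply]
    exact_mod_cast congrArg (algebraMap (𝓞 L) L)
      (AlgEquiv.commutes (galRestrict (𝓞 K) K L (𝓞 L) σ) x)
  have hQ3 : (Ideal.map f w.asIdeal) ^ 3 = w.asIdeal ^ 3 := by
    rw [← Ideal.map_pow, ← hw, Ideal.map_map, hcomp, hw]
  have hQbot : Ideal.map f w.asIdeal ≠ ⊥ := by
    intro h
    apply w.ne_bot
    rw [← Ideal.zero_eq_bot] at h ⊢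
    have h3 : w.asIdeal ^ 3 = 0 := by rw [← hQ3, h, zero_pow]; norm_num
    exact pow_eq_zero_iff (by norm_num : (3:ℕ) ≠ 0) |>.mp h3
  have hQp : (Ideal.map f w.asIdeal).IsPrime := Ideal.map_isPrime_of_equiv
    ((galRestrict (𝓞 K) K L (𝓞 L) σ : 𝓞 L ≃ₐ[𝓞 K] 𝓞 L) : 𝓞 L ≃+* 𝓞 L)
  have hQprime : Prime (Ideal.map f w.asIdeal) := Ideal.prime_of_isPrime hQbot hQp
  have hwprime : Prime w.asIdeal := Ideal.prime_of_isPrime w.ne_bot w.isPrime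
  have h1 : w.asIdeal ∣ Ideal.map f w.asIdeal := by
    have : w.asIdeal ∣ (Ideal.map f w.asIdeal) ^ 3 := by
      rw [hQ3]; exact dvd_pow_self _ (by norm_num)
    exact hwprime.dvd_of_dvd_pow this
  have h2 : Ideal.map f w.asIdeal ∣ w.asIdeal := by
    have : Ideal.map f w.asIdeal ∣ w.asIdeal ^ 3 := by
      rw [← hQ3]; exact dvd_pow_self _ (by norm_num)
    exact hQprime.dvd_of_dvd_pow this
  exact le_antisymm (Ideal.le_of_dvd h1) (Ideal.le_of_dvd h2)

theorem intval_gal (hw : Ideal.map (algebraMap (𝓞 K) (𝓞 L)) v.asIdeal = w.asIdeal ^ 3)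
    (σ : L ≃ₐ[K] L) (r : 𝓞 L) :
    w.intValuation (galRestrict (𝓞 K) K L (𝓞 L) σ r) = w.intValuation r := by
  set e : 𝓞 L ≃+* 𝓞 L := (galRestrict (𝓞 K) K L (𝓞 L) σ).toRingEquiv with he
  have hmapw : Ideal.map (e : 𝓞 L →+* 𝓞 L) w.asIdeal = w.asIdeal :=
    galois_fixes_w v w hw σ
  by_cases hr : r = 0
  · subst hr; rw [map_zero, map_zero]
  have hgr : galRestrict (𝓞 K) K L (𝓞 L) σ r = e r := rfl
  have hrne : e r ≠ 0 := fun h => hr (e.injective (by rw [h, map_zero]))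
  have key : ∀ n : ℕ, (w.asIdeal ^ n ∣ Ideal.span {e r} ↔ w.asIdeal ^ n ∣ Ideal.span {r}) := by
    intro n
    have hsp : Ideal.span {e r} = Ideal.map (e : 𝓞 L →+* 𝓞 L) (Ideal.span {r}) := by
      rw [Ideal.map_span, Set.image_singleton]; rfl
    have hpow : Ideal.map (e : 𝓞 L →+* 𝓞 L) (w.asIdeal ^ n) = w.asIdeal ^ n := by
      rw [Ideal.map_pow, hmapw]
    rw [Ideal.dvd_iff_le, Ideal.dvd_iff_le, hsp]
    constructor
    · intro h
      have h' : Ideal.map (e : 𝓞 L →+* 𝓞 L) (Ideal.span {r})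
          ≤ Ideal.map (e : 𝓞 L →+* 𝓞 L) (w.asIdeal ^ n) := by rw [hpow]; exact h
      have h2 := Ideal.map_mono (f := (e.symm : 𝓞 L →+* 𝓞 L)) h'
      rwa [Ideal.map_of_equiv, Ideal.map_of_equiv] at h2
    · intro h
      calc Ideal.map (e : 𝓞 L →+* 𝓞 L) (Ideal.span {r})
          ≤ Ideal.map (e : 𝓞 L →+* 𝓞 L) (w.asIdeal ^ n) := Ideal.map_mono h
        _ = w.asIdeal ^ n := hpow
  obtain ⟨n, hn⟩ := intval_exists_nat w hr
  have hd1 : w.asIdeal ^ n ∣ Ideal.span {r} := (intval_le_pow_iff w r n).mp (le_of_eq hn)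
  have hd2 : ¬ w.asIdeal ^ (n + 1) ∣ Ideal.span {r} := by
    intro h
    have h2 := (intval_le_pow_iff w r (n + 1)).mpr h
    rw [hn, WithZero.coe_le_coe, Multiplicative.ofAdd_le] at h2
    push_cast at h2; omega
  rw [hgr, intval_eq_of_dvd_not_dvd w hrne ((key n).mpr hd1)
    (fun h => hd2 ((key (n + 1)).mp h)), hn]

theorem val_gal (hw : Ideal.map (algebraMap (𝓞 K) (𝓞 L)) v.asIdeal = w.asIdeal ^ 3)
    (σ : L ≃ₐ[K] L) (x : L) : w.valuation L (σ x) = w.valuation L x := by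
  obtain ⟨p, q, hq, rfl⟩ := IsFractionRing.div_surjective (A := 𝓞 L) x
  rw [map_div₀, map_div₀, map_div₀]
  rw [← algebraMap_galRestrict_apply (𝓞 K), ← algebraMap_galRestrict_apply (𝓞 K)]
  rw [w.valuation_of_algebraMap, w.valuation_of_algebraMap,
    w.valuation_of_algebraMap, w.valuation_of_algebraMap,
    intval_gal v w hw σ p, intval_gal v w hw σ q]

end NF


/-- **Proposition (ramified primes, part a).**  Let `𝔩 = v` be a prime of `O_K` ramified in
the cyclic cubic extension `L/K`, say `𝔩 O_L = 𝔓³` with `𝔓 = w`, and suppose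
`ℓ = #(O_K/𝔩)` is not a power of `3`.  Let `α ∈ (O_K/𝔩)^*` and let `a, b, c, d ∈ L` be
`𝔓`-integral with residues `a ≡ α/3`, `b ≡ 1/3`, `c ≡ 1/(3α) (mod 𝔓)` (equivalently
`3a ≡ α`, `3b ≡ 1`, `3αc ≡ 1`), and `ν_𝔓(d) ∈ {1, 2}`.  Then the cubic surface
`T0T1T2 = N_{L/K}(aT0 + bT1 + cT2 + dT3)` (with defining norm form `P` over `K`) has a
`K_𝔩`-rational point. -/
theorem ramified_prime_local_solubility
    {K : Type*} [Field K] [NumberField K]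
    {L : Type*} [Field L] [NumberField L] [Algebra K L] [IsGalois K L]
    [FiniteDimensional K L] (hdeg : Module.finrank K L = 3)
    (v : HeightOneSpectrum (𝓞 K)) (w : HeightOneSpectrum (𝓞 L))
    (hw : Ideal.map (algebraMap (𝓞 K) (𝓞 L)) v.asIdeal = w.asIdeal ^ 3)
    (hq : ¬∃ n : ℕ, Nat.card (𝓞 K ⧸ v.asIdeal) = 3 ^ n)
    (α : 𝓞 K ⧸ v.asIdeal) (hα : α ≠ 0)
    (a b c d : L)
    (ha0 : w.valuation L a ≤ 1) (hb0 : w.valuation L b ≤ 1) (hc0 : w.valuation L c ≤ 1)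
    -- a ≡ α/3 (mod 𝔓), via the isomorphism O_L/𝔓 ≅ O_K/𝔩
    (ha : ∃ A : 𝓞 K, Ideal.Quotient.mk v.asIdeal A = α ∧
      w.valuation L (3 * a - algebraMap K L (algebraMap (𝓞 K) K A)) < 1)
    -- b ≡ 1/3 (mod 𝔓)
    (hb : w.valuation L (3 * b - 1) < 1)
    -- c ≡ 1/(3α) (mod 𝔓)
    (hc : ∃ A : 𝓞 K, Ideal.Quotient.mk v.asIdeal A = α ∧
      w.valuation L (3 * algebraMap K L (algebraMap (𝓞 K) K A) * c - 1) < 1)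
    -- ν_𝔓(d) ∈ {1, 2}
    (hd : w.valuation L d = ((Multiplicative.ofAdd (-1 : ℤ) : Multiplicative ℤ) : WithZero (Multiplicative ℤ)) ∨
          w.valuation L d = ((Multiplicative.ofAdd (-2 : ℤ) : Multiplicative ℤ) : WithZero (Multiplicative ℤ)))
    -- P is the norm form N_{L/K}(aT0 + bT1 + cT2 + dT3), a cubic form over K
    (P : MvPolynomial (Fin 4) K)
    (hP : MvPolynomial.map (algebraMap K L) P =
      ∏ σ : L ≃ₐ[K] L, (C (σ a) * X 0 + C (σ b) * X 1 + C (σ c) * X 2 + C (σ d) * X 3)) :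
    ∃ t : Fin 4 → v.adicCompletion K, t ≠ 0 ∧ t 0 * t 1 * t 2 = aeval t P := by
  classical
  obtain ⟨A, hAα, hAc⟩ := hc
  set AK : K := algebraMap (𝓞 K) K A with hAK
  set AL : L := algebraMap K L AK with hAL
  -- A is a unit at v
  have hAnmem : A ∉ v.asIdeal := by
    intro hmem
    exact hα (hAα ▸ (Ideal.Quotient.eq_zero_iff_mem.mpr hmem))
  have hvAK : v.valuation K AK = 1 := by
    rw [hAK, v.valuation_of_algebraMap]
    rcases lt_or_eq_of_le ((v.intValuation_apply (r := A)) ▸ v.intValuation_le_one A) with hlt | heq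
    · exfalso
      rw [← v.intValuation_apply, v.intValuation_lt_one_iff_dvd, Ideal.dvd_span_singleton] at hlt
      exact hAnmem hlt
    · exact heq
  -- 3 is a unit at v and at w
  have h3v : (3 : 𝓞 K) ∉ v.asIdeal := by
    intro hmem
    apply hq
    haveI hmax : v.asIdeal.IsMaximal := Ideal.IsPrime.isMaximal v.isPrime v.ne_bot
    letI : Field (𝓞 K ⧸ v.asIdeal) := Ideal.Quotient.field v.asIdeal
    letI : Fintype (𝓞 K ⧸ v.asIdeal) := @Fintype.ofFinite _ (Ideal.finiteQuotientOfFreeOfNeBot v.asIdeal v.ne_bot)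
    have h3zero : ((3 : ℕ) : 𝓞 K ⧸ v.asIdeal) = 0 := by
      rw [← map_natCast (Ideal.Quotient.mk v.asIdeal) 3]
      refine Ideal.Quotient.eq_zero_iff_mem.mpr ?_
      have : ((3 : ℕ) : 𝓞 K) = (3 : 𝓞 K) := by norm_num
      rwa [this]
    have hdvd : ringChar (𝓞 K ⧸ v.asIdeal) ∣ 3 := ringChar.dvd h3zero
    have hchar : ringChar (𝓞 K ⧸ v.asIdeal) = 3 := by
      rcases (Nat.prime_three).eq_one_or_self_of_dvd _ hdvd with h | h
      · exact absurd h (CharP.ringChar_ne_one)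
      · exact h
    haveI : CharP (𝓞 K ⧸ v.asIdeal) 3 := hchar ▸ ringChar.charP _
    obtain ⟨n, hnpos, hcard⟩ := FiniteField.card (𝓞 K ⧸ v.asIdeal) 3
    exact ⟨n, by rw [Nat.card_eq_fintype_card]; exact hcard⟩
  have intval_unit : ∀ (r : 𝓞 L), r ∉ w.asIdeal → w.intValuation r = 1 := by
    intro r hr
    rcases lt_or_eq_of_le ((w.intValuation_apply (r := r)) ▸ w.intValuation_le_one r) with hlt | heq
    · exfalso
      rw [← w.intValuation_apply, w.intValuation_lt_one_iff_dvd, Ideal.dvd_span_singleton] at hlt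
      exact hr hlt
    · exact heq
  have h3w : w.valuation L (3 : L) = 1 := by
    have h3L : (3 : L) = algebraMap (𝓞 L) L (algebraMap (𝓞 K) (𝓞 L) (3 : 𝓞 K)) := by
      rw [map_ofNat, map_ofNat]
    rw [h3L, w.valuation_of_algebraMap]
    apply intval_unit
    intro hmem
    apply h3v
    have hm2 : (3 : 𝓞 K) ∈ Ideal.comap (algebraMap (𝓞 K) (𝓞 L)) w.asIdeal :=
      Ideal.mem_comap.mpr hmem
    rwa [comap_w v w hw] at hm2
  -- the element e = b - A·c has positive valuation
  set e : L := b - AL * c with he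
  have hwe : w.valuation L e < 1 := by
    have h3e : (3 : L) * e = (3 * b - 1) - (3 * AL * c - 1) := by rw [he]; ring
    have hv3e : w.valuation L ((3 : L) * e) < 1 := by
      rw [h3e]
      exact lt_of_le_of_lt (Valuation.map_sub _ _ _) (max_lt hb hAc)
    rwa [Valuation.map_mul, h3w, one_mul] at hv3e
  have hconjA : ∀ σ : L ≃ₐ[K] L, w.valuation L (σ a) ≤ 1 := by
    intro σ; rw [val_gal v w hw σ a]; exact ha0
  have hconjE : ∀ σ : L ≃ₐ[K] L, w.valuation L (σ b - AL * σ c) < 1 := by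
    intro σ
    have hσe : σ e = σ b - AL * σ c := by
      rw [he, map_sub, map_mul, hAL, AlgEquiv.commutes]
    rw [← hσe, val_gal v w hw σ e]
    exact hwe
  -- the one-variable polynomial hpoly(X) = P(X, 1, -A, 0)
  set pt : Fin 4 → Polynomial K := ![Polynomial.X, 1, Polynomial.C (-AK), 0] with hpt
  set hpoly : Polynomial K := MvPolynomial.aeval pt P with hhpoly
  set ptL : Fin 4 → Polynomial L := ![Polynomial.X, 1, Polynomial.C (-AL), 0] with hptL
  have hmaph : Polynomial.map (algebraMap K L) hpoly
      = ∏ σ : L ≃ₐ[K] L,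
        (Polynomial.C (σ a) * Polynomial.X + Polynomial.C (σ b - AL * σ c)) := by
    have step1 : Polynomial.map (algebraMap K L) hpoly = MvPolynomial.aeval (R := K) ptL P := by
      have hco : Polynomial.map (algebraMap K L) hpoly
          = (Polynomial.mapAlgHom (Algebra.ofId K L)) (MvPolynomial.aeval pt P) := by
        rw [hhpoly]; rfl
      rw [hco, MvPolynomial.comp_aeval_apply]
      have hfun : (fun i => (Polynomial.mapAlgHom (Algebra.ofId K L)) (pt i)) = ptL := by
        funext i
        fin_cases i
        · show Polynomial.map _ Polynomial.X = Polynomial.X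
          rw [Polynomial.map_X]
        · show Polynomial.map _ 1 = 1
          rw [Polynomial.map_one]
        · show Polynomial.map _ (Polynomial.C (-AK)) = Polynomial.C (-AL)
          rw [Polynomial.map_C, map_neg, hAL]
          rfl
        · show Polynomial.map _ 0 = 0
          rw [Polynomial.map_zero]
      rw [hfun]
    have step2 : MvPolynomial.aeval (R := K) ptL P
        = MvPolynomial.aeval (R := L) ptL (MvPolynomial.map (algebraMap K L) P) :=
      (MvPolynomial.aeval_map_algebraMap _ _ _).symm
    rw [step1, step2, hP, map_prod]
    refine Finset.prod_congr rfl fun σ _ => ?_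
    rw [map_add, map_add, map_add, map_mul, map_mul, map_mul, map_mul,
      MvPolynomial.aeval_X, MvPolynomial.aeval_X, MvPolynomial.aeval_X, MvPolynomial.aeval_X,
      MvPolynomial.aeval_C, MvPolynomial.aeval_C, MvPolynomial.aeval_C, MvPolynomial.aeval_C]
    have hC : ∀ z : L, algebraMap L (Polynomial L) z = Polynomial.C z := fun z => rfl
    have h0 : ptL 0 = Polynomial.X := rfl
    have h1' : ptL 1 = 1 := rfl
    have h2' : ptL 2 = Polynomial.C (-AL) := rfl
    have h3' : ptL 3 = 0 := rfl
    rw [hC, hC, hC, hC, h0, h1', h2', h3']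
    have hCsub : Polynomial.C (σ b - AL * σ c)
        = Polynomial.C (σ b) - Polynomial.C AL * Polynomial.C (σ c) := by
      rw [map_sub, map_mul]
    rw [hCsub, map_neg]
    ring
  have hcard : (Finset.univ : Finset (L ≃ₐ[K] L)).card = 3 := by
    rw [Finset.card_univ, ← Nat.card_eq_fintype_card, IsGalois.card_aut_eq_finrank, hdeg]
  have hbounds := coeff_prod_linear (w.valuation L) (Finset.univ : Finset (L ≃ₐ[K] L))
    (fun σ => σ a) (fun σ => σ b - AL * σ c) hconjA hconjE
  have hcoeffmap : ∀ j, Polynomial.coeff (Polynomial.map (algebraMap K L) hpoly) j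
      = algebraMap K L (hpoly.coeff j) := fun j => Polynomial.coeff_map _ j
  have hwcoeff_le : ∀ j, w.valuation L (algebraMap K L (hpoly.coeff j)) ≤ 1 := by
    intro j
    rw [← hcoeffmap, hmaph]
    exact (hbounds j).1
  have hwcoeff_lt : ∀ j, j < 3 → w.valuation L (algebraMap K L (hpoly.coeff j)) < 1 := by
    intro j hj
    rw [← hcoeffmap, hmaph]
    exact (hbounds j).2 (by rw [hcard]; exact hj)
  have hvcoeff_le : ∀ j, v.valuation K (hpoly.coeff j) ≤ 1 := by
    intro j
    by_contra hlt
    rw [not_le] at hlt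
    have h1 : (1 : ℤₘ₀) < v.valuation K (hpoly.coeff j) ^ 3 :=
      lt_of_lt_of_le hlt (le_self_pow₀ (le_of_lt hlt) (by norm_num))
    rw [← val_map_pow v w hw] at h1
    exact absurd (hwcoeff_le j) (not_le.mpr h1)
  have hvcoeff_lt : ∀ j, j < 3 → v.valuation K (hpoly.coeff j) < 1 := by
    intro j hj
    by_contra hge
    rw [not_lt] at hge
    have h1 : (1 : ℤₘ₀) ≤ v.valuation K (hpoly.coeff j) ^ 3 := by
      calc (1 : ℤₘ₀) = 1 ^ 3 := by norm_num
        _ ≤ v.valuation K (hpoly.coeff j) ^ 3 := pow_le_pow_left' hge 3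
    rw [← val_map_pow v w hw] at h1
    exact absurd (hwcoeff_lt j hj) (not_lt.mpr h1)
  have hdeg3 : hpoly.natDegree ≤ 3 := by
    have hdegmap : (Polynomial.map (algebraMap K L) hpoly).natDegree ≤ 3 := by
      rw [hmaph]
      refine le_trans (Polynomial.natDegree_prod_le _ _) ?_
      refine le_trans (Finset.sum_le_card_nsmul _ _ 1 ?_) ?_
      · intro σ _
        refine le_trans (Polynomial.natDegree_add_le _ _) (max_le ?_ ?_)
        · exact le_trans (Polynomial.natDegree_C_mul_le _ _) (le_of_eq Polynomial.natDegree_X)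
        · rw [Polynomial.natDegree_C]; omega
      · rw [hcard]; simp
    rwa [Polynomial.natDegree_map_eq_of_injective ((algebraMap K L).injective)] at hdegmap
  -- move to the completion
  set Fc := v.adicCompletion K with hFc
  set cf : ℕ → Fc := fun j => algebraMap K Fc (hpoly.coeff j) with hcf
  have hVval : ∀ z : K, Valued.v (algebraMap K Fc z) = v.valuation K z := by
    intro z
    exact v.valuedAdicCompletion_eq_valuation' z
  have hVcf : ∀ j, Valued.v (cf j) = v.valuation K (hpoly.coeff j) := fun j => hVval _
  set AF : Fc := algebraMap K Fc AK with hAF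
  have hVAF : Valued.v AF = 1 := by rw [hAF, hVval, hvAK]
  have hc1v : Valued.v (cf 1 + AF) = 1 := by
    rw [Valuation.map_add_eq_of_lt_right _ (by rw [hVAF, hVcf]; exact hvcoeff_lt 1 (by omega)),
      hVAF]
  obtain ⟨x, hx⟩ := cubic_hensel (c0 := cf 0) (c1 := cf 1 + AF) (c2 := cf 2) (c3 := cf 3)
    (by rw [hVcf]; exact hvcoeff_lt 0 (by omega)) hc1v
    (by rw [hVcf]; exact hvcoeff_le 2) (by rw [hVcf]; exact hvcoeff_le 3)
  refine ⟨![x, 1, -AF, 0], ?_, ?_⟩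
  · intro h0
    have h1 := congrFun h0 1
    simp at h1
  · have haeval : MvPolynomial.aeval ![x, (1 : Fc), -AF, 0] P = Polynomial.aeval x hpoly := by
      have hcomp := MvPolynomial.comp_aeval_apply (f := pt) (Polynomial.aeval x) P
      have hfun : (fun i => (Polynomial.aeval x) (pt i)) = ![x, (1 : Fc), -AF, 0] := by
        funext i
        fin_cases i
        · show Polynomial.aeval x Polynomial.X = x
          rw [Polynomial.aeval_X]
        · show Polynomial.aeval x (1 : Polynomial K) = 1
          rw [map_one]
        · show Polynomial.aeval x (Polynomial.C (-AK)) = -AF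
          rw [Polynomial.aeval_C, map_neg, hAF]
        · show Polynomial.aeval x (0 : Polynomial K) = 0
          rw [map_zero]
      rw [hhpoly, hcomp, hfun]
    have heval : Polynomial.aeval x hpoly = cf 0 + cf 1 * x + cf 2 * x ^ 2 + cf 3 * x ^ 3 := by
      rw [Polynomial.aeval_def, Polynomial.eval₂_eq_sum_range' (n := 4) (algebraMap K Fc)
        (lt_of_le_of_lt hdeg3 (by norm_num)) x]
      rw [Finset.sum_range_succ, Finset.sum_range_succ, Finset.sum_range_succ,
        Finset.sum_range_succ, Finset.sum_range_zero]
      rw [hcf]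
      ring
    show x * 1 * (-AF) = _
    rw [haeval, heval]
    linear_combination -hx
end
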